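/- arXiv:math/0410118 — 5 statements merged into one kernel-verified Lean document; each statement's English description precedes it below -/
import Mathlib

section
/- Suppose F is supported in [−p,p], α ∈ (0,2), and β^α θ₊(β) → θ₊ > 0 as β → 0. Then ρ₊(β) := ∫_{(β,∞)} x^α F(dx) satisfies ρ₊(β)/log(1/β) → α θ₊ as β → 0. -/
/-!
By the layer-cake formula, for any `c > 0` beyond the support of `F`,
`ρ₊(β) = β^α θ₊(β) + α ∫_β^c t^α θ₊(t) dt / t`.
The first term stays bounded, while the second is a logarithmic average of a function tending
to `θ₊`: if `f(t) → L` as `t → 0+`, then `∫_β^c f(t) dt / t = L log(1/β) + o(log(1/β))`.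
-/

open MeasureTheory Filter Set Topology

theorem tendsto_div_of_abs_sub_mul_le {ι : Type*} {l : Filter ι} {u v : ι → ℝ} {L : ℝ}
    (hv : Tendsto v l atTop) (h : ∀ ε > 0, ∃ K, ∀ᶠ x in l, |u x - L * v x| ≤ ε * v x + K) :
    Tendsto (fun x => u x / v x) l (𝓝 L) := by
  rw [Metric.tendsto_nhds]
  intro ε hε
  obtain ⟨K, hK⟩ := h (ε / 2) (half_pos hε)
  filter_upwards [hK, hv.eventually_gt_atTop (max 0 (2 * K / ε))] with x hx hvx
  have hv0 : 0 < v x := (le_max_left _ _).trans_lt hvx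
  have hKv : 2 * K < ε * v x := (div_lt_iff₀' hε).mp ((le_max_right _ _).trans_lt hvx)
  rw [Real.dist_eq, div_sub' hv0.ne', abs_div, abs_of_pos hv0, div_lt_iff₀ hv0, mul_comm (v x)]
  linarith

theorem tendsto_log_one_div_nhdsGT_zero :
    Tendsto (fun β : ℝ => Real.log (1 / β)) (𝓝[>] 0) atTop := by
  simp only [one_div, Real.log_inv]
  exact tendsto_neg_atBot_atTop.comp Real.tendsto_log_nhdsGT_zero

open Interval in
theorem tendsto_integral_div_self_div_log {f : ℝ → ℝ} {L c : ℝ}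
    (hf : Tendsto f (𝓝[>] 0) (𝓝 L)) (hc : 0 < c)
    (hint : ∀ β ∈ Ioc 0 c, IntervalIntegrable (fun t => f t / t) volume β c) :
    Tendsto (fun β => (∫ t in β..c, f t / t) / Real.log (1 / β)) (𝓝[>] 0) (𝓝 L) := by
  refine tendsto_div_of_abs_sub_mul_le tendsto_log_one_div_nhdsGT_zero fun ε hε => ?_
  obtain ⟨δ, ⟨hδ0, hδc, hδ1⟩, hfδ⟩ :
      ∃ δ, (0 < δ ∧ δ ≤ c ∧ δ ≤ 1) ∧ ∀ t ∈ Ioc 0 δ, |f t - L| ≤ ε := by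
    obtain ⟨u, hu0, hu⟩ := mem_nhdsGT_iff_exists_Ioc_subset.mp
      (hf.eventually (Metric.closedBall_mem_nhds L hε))
    exact ⟨min u (min c 1), ⟨lt_min hu0 (lt_min hc one_pos),
      (min_le_right _ _).trans (min_le_left _ _), (min_le_right _ _).trans (min_le_right _ _)⟩,
      fun t ht => hu ⟨ht.1, ht.2.trans (min_le_left _ _)⟩⟩
  refine ⟨|∫ t in δ..c, f t / t| + |L * Real.log δ|, ?_⟩
  filter_upwards [Ioo_mem_nhdsGT hδ0] with β ⟨hβ0, hβδ⟩
  have h0 : (0 : ℝ) ∉ [[β, δ]] := by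
    rw [uIcc_of_le hβδ.le]; exact fun h => hβ0.not_ge h.1
  have hinv : IntervalIntegrable (fun t : ℝ => t⁻¹) volume β δ :=
    intervalIntegral.intervalIntegrable_inv (fun t ht => ne_of_mem_of_not_mem ht h0)
      continuousOn_id
  have hfβδ : IntervalIntegrable (fun t => f t / t) volume β δ :=
    (hint β ⟨hβ0, hβδ.le.trans hδc⟩).mono_set (uIcc_subset_uIcc_left (by
      rw [uIcc_of_le (hβδ.le.trans hδc)]; exact ⟨hβδ.le, hδc⟩))
  have hlog : Real.log (δ / β) = Real.log δ + Real.log (1 / β) := by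
    rw [div_eq_mul_one_div, Real.log_mul hδ0.ne' (by positivity)]
  have hsplit : ∫ t in β..c, f t / t =
      (∫ t in β..δ, (f t - L) / t) + L * Real.log (δ / β) + ∫ t in δ..c, f t / t := by
    simp_rw [sub_div, div_eq_mul_inv L]
    rw [← intervalIntegral.integral_add_adjacent_intervals hfβδ (hint δ ⟨hδ0, hδc⟩),
      intervalIntegral.integral_sub hfβδ (hinv.const_mul L), intervalIntegral.integral_const_mul,
      integral_inv h0]
    ring
  have hlocal : |∫ t in β..δ, (f t - L) / t| ≤ ε * Real.log (δ / β) := by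
    rw [← Real.norm_eq_abs, ← integral_inv h0, ← intervalIntegral.integral_const_mul]
    refine intervalIntegral.norm_integral_le_of_norm_le hβδ.le (ae_of_all _ fun t ht => ?_)
      (hinv.const_mul ε)
    have ht0 : 0 < t := hβ0.trans ht.1
    rw [Real.norm_eq_abs, abs_div, abs_of_pos ht0, ← div_eq_mul_inv]
    exact div_le_div_of_nonneg_right (hfδ t ⟨ht0, ht.2⟩) ht0.le
  have hεlogδ : ε * Real.log δ ≤ 0 :=
    mul_nonpos_of_nonneg_of_nonpos hε.le (Real.log_nonpos hδ0.le hδ1)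
  rw [hsplit, hlog]
  rw [hlog] at hlocal
  calc _ = |(∫ t in β..δ, (f t - L) / t) + L * Real.log δ + ∫ t in δ..c, f t / t| := by
        congr 1; ring
    _ ≤ |∫ t in β..δ, (f t - L) / t| + |L * Real.log δ| + |∫ t in δ..c, f t / t| :=
        abs_add_three _ _ _
    _ ≤ ε * Real.log (1 / β) + (|∫ t in δ..c, f t / t| + |L * Real.log δ|) := by
        linarith

theorem lintegral_Ioi_rpow_eq (μ : Measure ℝ) {α β : ℝ} (hα : 0 < α) (hβ : 0 ≤ β) :
    ∫⁻ x in Ioi β, ENNReal.ofReal (x ^ α) ∂μ =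
      μ (Ioi β) * ENNReal.ofReal (β ^ α) +
        ENNReal.ofReal α * ∫⁻ t in Ioi β, μ (Ioi t) * ENNReal.ofReal (t ^ (α - 1)) := by
  have hnn : 0 ≤ᵐ[μ.restrict (Ioi β)] fun x => x :=
    ae_restrict_of_forall_mem measurableSet_Ioi fun x hx => hβ.trans hx.out.le
  have hlevel (t : ℝ) : μ.restrict (Ioi β) {x | t < x} = μ (Ioi (max t β)) := by
    change μ.restrict (Ioi β) (Ioi t) = _
    rw [Measure.restrict_apply measurableSet_Ioi, Ioi_inter_Ioi]
  have hpow : ∫⁻ t in Ioc 0 β, ENNReal.ofReal (t ^ (α - 1)) = ENNReal.ofReal (β ^ α / α) := by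
    rw [← ofReal_integral_eq_lintegral_ofReal
      (intervalIntegral.intervalIntegrable_rpow' (by linarith)).1
      (ae_restrict_of_forall_mem measurableSet_Ioc fun t ht => Real.rpow_nonneg ht.1.le _),
      ← intervalIntegral.integral_of_le hβ, integral_rpow (Or.inl (by linarith)),
      sub_add_cancel, Real.zero_rpow hα.ne', sub_zero]
  rw [lintegral_rpow_eq_lintegral_meas_lt_mul _ hnn aemeasurable_id' hα,
    ← Ioc_union_Ioi_eq_Ioi hβ, lintegral_union measurableSet_Ioi (Ioc_disjoint_Ioi le_rfl),
    setLIntegral_congr_fun measurableSet_Ioc fun t ht => by rw [hlevel, max_eq_right ht.2],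
    setLIntegral_congr_fun measurableSet_Ioi fun t ht => by rw [hlevel, max_eq_left ht.out.le],
    lintegral_const_mul _ (by fun_prop), hpow, mul_add,
    mul_left_comm, ← ENNReal.ofReal_mul hα.le, mul_div_cancel₀ _ hα.ne']

theorem intervalIntegrable_rpow_mul_measure_Ioi_div {μ : Measure ℝ} {α β c : ℝ} (hβ : 0 < β)
    (hβc : β ≤ c) (hfin : μ (Ioi β) ≠ ⊤) :
    IntervalIntegrable (fun t => t ^ α * (μ (Ioi t)).toReal / t) volume β c := by
  have hanti : AntitoneOn (fun t => (μ (Ioi t)).toReal) (uIcc β c) := by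
    rw [uIcc_of_le hβc]
    exact fun s hs t _ hst => ENNReal.toReal_mono
      (ne_top_of_le_ne_top hfin (measure_mono (Ioi_subset_Ioi hs.1)))
      (measure_mono (Ioi_subset_Ioi hst))
  have hcont : ContinuousOn (fun t : ℝ => t ^ α / t) (uIcc β c) := by
    rw [uIcc_of_le hβc]
    exact ContinuousOn.div (continuousOn_id.rpow_const fun t ht => Or.inl (hβ.trans_le ht.1).ne')
      continuousOn_id fun t ht => (hβ.trans_le ht.1).ne'
  convert (hanti.intervalIntegrable (μ := volume)).continuousOn_mul hcont using 2 with t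
  ring

theorem integral_Ioi_rpow_eq {μ : Measure ℝ} {α β c : ℝ} (hα : 0 < α) (hβ : 0 < β)
    (hβc : β ≤ c) (hfin : μ (Ioi β) ≠ ⊤) (hc : μ (Ioi c) = 0) :
    ∫ x in Ioi β, x ^ α ∂μ =
      β ^ α * (μ (Ioi β)).toReal + α * ∫ t in β..c, t ^ α * (μ (Ioi t)).toReal / t := by
  set I := ∫ t in β..c, t ^ α * (μ (Ioi t)).toReal / t with hI_def
  have hnonneg {t : ℝ} (ht : 0 < t) : 0 ≤ t ^ α * (μ (Ioi t)).toReal / t :=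
    div_nonneg (mul_nonneg (Real.rpow_nonneg ht.le _) ENNReal.toReal_nonneg) ht.le
  have hI : 0 ≤ I := intervalIntegral.integral_nonneg hβc fun t ht => hnonneg (hβ.trans_le ht.1)
  have htail : ∫⁻ t in Ioi β, μ (Ioi t) * ENNReal.ofReal (t ^ (α - 1)) = ENNReal.ofReal I := by
    have hvanish : ∫⁻ t in Ioi c, μ (Ioi t) * ENNReal.ofReal (t ^ (α - 1)) = 0 :=
      (setLIntegral_congr_fun measurableSet_Ioi fun t ht => by
        rw [measure_mono_null (Ioi_subset_Ioi ht.out.le) hc, zero_mul]).trans lintegral_zero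
    rw [← Ioc_union_Ioi_eq_Ioi hβc, lintegral_union measurableSet_Ioi (Ioc_disjoint_Ioi le_rfl),
      hvanish, add_zero, hI_def, intervalIntegral.integral_of_le hβc,
      ofReal_integral_eq_lintegral_ofReal
        (intervalIntegrable_rpow_mul_measure_Ioi_div hβ hβc hfin).1
        (ae_restrict_of_forall_mem measurableSet_Ioc fun t ht => hnonneg (hβ.trans ht.1))]
    refine setLIntegral_congr_fun measurableSet_Ioc fun t ht => ?_
    have ht0 : 0 < t := hβ.trans ht.1
    rw [Real.rpow_sub_one ht0.ne', mul_div_right_comm,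
      ENNReal.ofReal_mul (div_nonneg (Real.rpow_nonneg ht0.le _) ht0.le),
      ENNReal.ofReal_toReal (ne_top_of_le_ne_top hfin (measure_mono (Ioi_subset_Ioi ht.1.le))),
      mul_comm]
  rw [integral_eq_lintegral_of_nonneg_ae
      (ae_restrict_of_forall_mem measurableSet_Ioi fun x hx =>
        Real.rpow_nonneg (hβ.trans hx).le _)
      (by fun_prop : Measurable fun x : ℝ => x ^ α).aestronglyMeasurable,
    lintegral_Ioi_rpow_eq μ hα hβ.le, htail, ← ENNReal.ofReal_mul hα.le,
    ENNReal.toReal_add (ENNReal.mul_ne_top hfin ENNReal.ofReal_ne_top) ENNReal.ofReal_ne_top,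
    ENNReal.toReal_mul, ENNReal.toReal_ofReal (Real.rpow_nonneg hβ.le _),
    ENNReal.toReal_ofReal (mul_nonneg hα.le hI), mul_comm]

theorem measure_Ioi_ne_top_of_tendsto_rpow_mul {μ : Measure ℝ} {α θ : ℝ} (hθ : θ ≠ 0)
    (h : Tendsto (fun β : ℝ => β ^ α * (μ (Ioi β)).toReal) (𝓝[>] 0) (𝓝 θ)) {t : ℝ}
    (ht : 0 < t) : μ (Ioi t) ≠ ⊤ := by
  obtain ⟨β, hβ, hβt⟩ := ((h.eventually_ne hθ).and (Ioo_mem_nhdsGT ht)).exists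
  exact ne_top_of_le_ne_top (ENNReal.toReal_ne_zero.mp (right_ne_zero_of_mul hβ)).2
    (measure_mono (Ioi_subset_Ioi hβt.2.le))

theorem stmt5_general (F : Measure ℝ) (p α θp : ℝ)
    (hsupp : F {x : ℝ | p < |x|} = 0)
    (hα0 : 0 < α) (hθp : 0 < θp)
    (hlim : Tendsto (fun β : ℝ => β ^ α * (F (Ioi β)).toReal) (𝓝[>] 0) (𝓝 θp)) :
    Tendsto (fun β : ℝ => (∫ x in Ioi β, x ^ α ∂F) / Real.log (1 / β))
      (𝓝[>] 0) (𝓝 (α * θp)) := by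
  obtain ⟨c, hc0, hc⟩ : ∃ c > 0, F (Ioi c) = 0 :=
    ⟨max p 1, lt_max_of_lt_right one_pos, measure_mono_null (fun x (hx : max p 1 < x) =>
      ((le_max_left p 1).trans_lt hx).trans_le (le_abs_self x)) hsupp⟩
  have hfin (t : ℝ) (ht : 0 < t) : F (Ioi t) ≠ ⊤ :=
    measure_Ioi_ne_top_of_tendsto_rpow_mul hθp.ne' hlim ht
  have hmain := tendsto_integral_div_self_div_log hlim hc0 fun β hβ =>
    intervalIntegrable_rpow_mul_measure_Ioi_div hβ.1 hβ.2 (hfin β hβ.1)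
  have hdecomp : ∀ᶠ β in 𝓝[>] 0,
      β ^ α * (F (Ioi β)).toReal / Real.log (1 / β) +
          α * ((∫ t in β..c, t ^ α * (F (Ioi t)).toReal / t) / Real.log (1 / β)) =
        (∫ x in Ioi β, x ^ α ∂F) / Real.log (1 / β) := by
    filter_upwards [Ioo_mem_nhdsGT hc0] with β hβ
    rw [integral_Ioi_rpow_eq hα0 hβ.1 hβ.2.le (hfin β hβ.1) hc]
    ring
  simpa using ((hlim.div_atTop tendsto_log_one_div_nhdsGT_zero).add
    (hmain.const_mul α)).congr' hdecomp

/-- Under (H2-α) on the positive side with `θ₊ > 0`,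
`ρ₊(β) = ∫_{(β,∞)} x^α F(dx)` satisfies `ρ₊(β)/log(1/β) → α θ₊` as `β → 0`. -/
theorem stmt5 (F : Measure ℝ) (p α θp : ℝ) (hp : 1 ≤ p)
    (hsupp : F {x : ℝ | p < |x|} = 0)
    (hlevy : ∫⁻ x, ENNReal.ofReal (min (x ^ 2) 1) ∂F < ⊤)
    (hα0 : 0 < α) (hα2 : α < 2) (hθp : 0 < θp)
    (hlim : Tendsto (fun β : ℝ => β ^ α * (F (Ioi β)).toReal) (𝓝[>] 0) (𝓝 θp)) :
    Tendsto (fun β : ℝ => (∫ x in Ioi β, x ^ α ∂F) / Real.log (1 / β))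
      (𝓝[>] 0) (𝓝 (α * θp)) :=
  stmt5_general F p α θp hsupp hα0 hθp hlim
end

section
/- Suppose F is supported in [−p,p], α ∈ (1,2), and β^α θ₊(β) → θ₊ > 0 as β → 0. Then d₊(β) := ∫_{(β,∞)} x F(dx) satisfies β^{α−1} d₊(β) → α θ₊ / (α−1) as β → 0. -/
/-!
Layer cake on `(β, ∞)` gives `d₊(β) = β θ₊(β) + ∫_β^p θ₊(t) dt`, as `θ₊` vanishes beyond `p`.
The first term contributes `β^α θ₊(β) → θ₊`. For the second, `θ₊(t) = θ₊ t^{-α} + o(t^{-α})`,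
and since `∫_β^p t^{-α} dt ~ β^{1-α}/(α-1)` diverges, integrating the error term only adds
`o(β^{1-α})`; so `β^{α-1} ∫_β^p θ₊ → θ₊/(α-1)`, and the two add up to `α θ₊/(α-1)`.
-/

open MeasureTheory Filter Set Topology Asymptotics

section Tail

variable (F : Measure ℝ)

theorem antitone_measure_Ioi : Antitone fun t => F (Ioi t) :=
  fun _ _ hst => measure_mono (Ioi_subset_Ioi hst)

theorem measure_Ioi_lt_top_of_lintegral_min_sq_one
    (hF : ∫⁻ x, ENNReal.ofReal (min (x ^ 2) 1) ∂F < ⊤) {β : ℝ} (hβ : 0 < β) :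
    F (Ioi β) < ⊤ := by
  set ε := ENNReal.ofReal (min (β ^ 2) 1)
  have hε : ε ≠ 0 := (ENNReal.ofReal_pos.2 (lt_min (by positivity) one_pos)).ne'
  have hsub : Ioi β ⊆ {x | ε ≤ ENNReal.ofReal (min (x ^ 2) 1)} := fun x (hx : β < x) =>
    ENNReal.ofReal_le_ofReal (min_le_min_right 1 (pow_le_pow_left₀ hβ.le hx.le 2))
  refine (measure_mono hsub).trans_lt ?_
  exact ENNReal.lt_top_of_mul_ne_top_right
    ((mul_meas_ge_le_lintegral (by fun_prop) ε).trans_lt hF).ne hε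

theorem setLIntegral_Ioi_ofReal_eq_mul_add {β : ℝ} (hβ : 0 ≤ β) :
    ∫⁻ x in Ioi β, ENNReal.ofReal x ∂F
      = ENNReal.ofReal β * F (Ioi β) + ∫⁻ t in Ioi β, F (Ioi t) := by
  have hpos : 0 ≤ᵐ[F.restrict (Ioi β)] fun x => x :=
    (ae_restrict_iff' measurableSet_Ioi).2 (ae_of_all _ fun x hx => hβ.trans (le_of_lt hx))
  rw [lintegral_eq_lintegral_meas_lt _ hpos aemeasurable_id, ← Ioc_union_Ioi_eq_Ioi hβ,
    lintegral_union measurableSet_Ioi Ioc_disjoint_Ioi_same]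
  congr 1
  · rw [setLIntegral_congr_fun (g := fun _ => F (Ioi β)) measurableSet_Ioc
      fun t (ht : t ∈ Ioc 0 β) => by
        rw [Measure.restrict_apply' measurableSet_Ioi]
        exact congrArg F (inter_eq_right.2 (Ioi_subset_Ioi ht.2)),
      setLIntegral_const, Real.volume_Ioc, sub_zero, mul_comm]
  · refine setLIntegral_congr_fun measurableSet_Ioi fun t (ht : β < t) => ?_
    rw [Measure.restrict_apply' measurableSet_Ioi]
    exact congrArg F (inter_eq_left.2 (Ioi_subset_Ioi ht.le))

theorem integrableOn_Ioc_toReal_measure_Ioi {a : ℝ} (ha : F (Ioi a) ≠ ⊤) (b : ℝ) :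
    IntegrableOn (fun t => (F (Ioi t)).toReal) (Ioc a b) := by
  have hanti : AntitoneOn (fun t => (F (Ioi t)).toReal) (Icc a b) := fun s hs _ _ hst =>
    ENNReal.toReal_mono (ne_top_of_le_ne_top ha (antitone_measure_Ioi F hs.1))
      (antitone_measure_Ioi F hst)
  exact (hanti.integrableOn_isCompact isCompact_Icc).mono_set Ioc_subset_Icc_self

theorem setIntegral_Ioi_id_eq_mul_add_integral_Ioc {β p : ℝ} (hβ : 0 ≤ β) (hβp : β ≤ p)
    (hp : F (Ioi p) = 0) (hβfin : F (Ioi β) ≠ ⊤) :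
    ∫ x in Ioi β, x ∂F = β * (F (Ioi β)).toReal + ∫ t in Ioc β p, (F (Ioi t)).toReal := by
  have hpos : 0 ≤ᵐ[F.restrict (Ioi β)] fun x => x :=
    (ae_restrict_iff' measurableSet_Ioi).2 (ae_of_all _ fun x hx => hβ.trans (le_of_lt hx))
  have htail : ∫⁻ t in Ioi β, F (Ioi t) = ∫⁻ t in Ioc β p, F (Ioi t) := by
    rw [← Ioc_union_Ioi_eq_Ioi hβp, lintegral_union measurableSet_Ioi Ioc_disjoint_Ioi_same,
      setLIntegral_eq_zero measurableSet_Ioi fun t (ht : p < t) =>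
        measure_mono_null (Ioi_subset_Ioi ht.le) hp, add_zero]
  have hle : ∀ t ∈ Ioc β p, F (Ioi t) ≤ F (Ioi β) := fun _ ht =>
    antitone_measure_Ioi F ht.1.le
  have hfin : ∫⁻ t in Ioc β p, F (Ioi t) ≠ ⊤ := by
    have hvol : volume (Ioc β p) ≠ ⊤ := measure_Ioc_lt_top.ne
    refine ne_top_of_le_ne_top (ENNReal.mul_ne_top hβfin hvol) ?_
    rw [← setLIntegral_const]
    exact setLIntegral_mono (by fun_prop) hle
  rw [integral_eq_lintegral_of_nonneg_ae hpos aestronglyMeasurable_id,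
    setLIntegral_Ioi_ofReal_eq_mul_add F hβ, htail,
    ENNReal.toReal_add (ENNReal.mul_ne_top ENNReal.ofReal_ne_top hβfin) hfin,
    ENNReal.toReal_mul, ENNReal.toReal_ofReal hβ,
    integral_toReal (antitone_measure_Ioi F).measurable.aemeasurable
      ((ae_restrict_iff' measurableSet_Ioc).2 (ae_of_all _ fun t ht =>
        (hle t ht).trans_lt hβfin.lt_top))]

end Tail

theorem isLittleO_setIntegral_Ioc {h g : ℝ → ℝ} {a b : ℝ} (hab : a < b)
    (hh : ∀ x, a < x → IntegrableOn h (Ioc x b)) (hg : ∀ x, a < x → IntegrableOn g (Ioc x b))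
    (hg0 : ∀ t ∈ Ioc a b, 0 ≤ g t)
    (hgtop : Tendsto (fun β => ∫ t in Ioc β b, g t) (𝓝[>] a) atTop)
    (hhg : h =o[𝓝[>] a] g) :
    (fun β => ∫ t in Ioc β b, h t) =o[𝓝[>] a] fun β => ∫ t in Ioc β b, g t := by
  refine isLittleO_iff.2 fun ε hε => ?_
  obtain ⟨δ, hδ, hsmall⟩ : ∃ δ ∈ Ioc a b, ∀ t ∈ Ioc a δ, ‖h t‖ ≤ ε / 2 * g t := by
    obtain ⟨u, hu, hsub⟩ := mem_nhdsGT_iff_exists_Ioc_subset.1 (hhg.def (half_pos hε))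
    refine ⟨min u b, ⟨lt_min hu hab, min_le_right u b⟩, fun t ht => ?_⟩
    have ht' : t ∈ Ioc a b := ⟨ht.1, ht.2.trans (min_le_right u b)⟩
    have hsmall : ‖h t‖ ≤ ε / 2 * ‖g t‖ := hsub ⟨ht.1, ht.2.trans (min_le_left u b)⟩
    rwa [Real.norm_of_nonneg (hg0 t ht')] at hsmall
  set C := ‖∫ t in Ioc δ b, h t‖
  filter_upwards [Ioo_mem_nhdsGT hδ.1, hgtop.eventually_ge_atTop (2 * C / ε)]
    with β hβ hCβ
  set G := ∫ t in Ioc β b, g t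
  have hG : 0 ≤ G := setIntegral_nonneg measurableSet_Ioc fun t ht =>
    hg0 t ⟨hβ.1.trans ht.1, ht.2⟩
  have hnear : ‖∫ t in Ioc β δ, h t‖ ≤ ε / 2 * G := calc
    _ ≤ ∫ t in Ioc β δ, ‖h t‖ := norm_integral_le_integral_norm _
    _ ≤ ∫ t in Ioc β δ, ε / 2 * g t :=
      setIntegral_mono_on ((hh β hβ.1).mono_set (Ioc_subset_Ioc_right hδ.2)).norm
        (((hg β hβ.1).mono_set (Ioc_subset_Ioc_right hδ.2)).const_mul _) measurableSet_Ioc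
        fun t ht => hsmall t ⟨hβ.1.trans ht.1, ht.2⟩
    _ = ε / 2 * ∫ t in Ioc β δ, g t := integral_const_mul _ _
    _ ≤ ε / 2 * G := by
      gcongr
      refine setIntegral_mono_set (hg β hβ.1) ?_ (Ioc_subset_Ioc_right hδ.2).eventuallyLE
      exact (ae_restrict_iff' measurableSet_Ioc).2 (ae_of_all _ fun t ht =>
        hg0 t ⟨hβ.1.trans ht.1, ht.2⟩)
  have hfar : C ≤ ε / 2 * G := by
    rw [div_le_iff₀ hε] at hCβ
    linarith
  calc ‖∫ t in Ioc β b, h t‖ = ‖(∫ t in Ioc β δ, h t) + ∫ t in Ioc δ b, h t‖ := by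
        rw [← setIntegral_union (Ioc_disjoint_Ioc_of_le le_rfl) measurableSet_Ioc
          ((hh β hβ.1).mono_set (Ioc_subset_Ioc_right hδ.2)) (hh δ hδ.1),
          Ioc_union_Ioc_eq_Ioc hβ.2.le hδ.2]
    _ ≤ ‖∫ t in Ioc β δ, h t‖ + C := norm_add_le _ _
    _ ≤ ε * ‖G‖ := by rw [Real.norm_of_nonneg hG]; linarith

theorem integral_Ioc_rpow_neg {α β b : ℝ} (hα : 1 < α) (hβ : 0 < β) (hβb : β ≤ b) :
    ∫ t in Ioc β b, t ^ (-α) = (β ^ (1 - α) - b ^ (1 - α)) / (α - 1) := by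
  have h0 : (0 : ℝ) ∉ uIcc β b := by
    rw [uIcc_of_le hβb]
    exact fun h => h.1.not_gt hβ
  rw [← intervalIntegral.integral_of_le hβb,
    integral_rpow (Or.inr ⟨by linarith, h0⟩), show -α + 1 = 1 - α by ring,
    div_eq_div_iff (by linarith) (by linarith)]
  ring

theorem integrableOn_Ioc_rpow_neg {α a : ℝ} (ha : 0 < a) (b : ℝ) :
    IntegrableOn (fun t : ℝ => t ^ (-α)) (Ioc a b) :=
  (ContinuousOn.integrableOn_Icc (continuousOn_id.rpow_const fun _ ht =>
    Or.inl (ha.trans_le ht.1).ne')).mono_set Ioc_subset_Icc_self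

theorem tendsto_integral_Ioc_rpow_neg_atTop {α b : ℝ} (hα : 1 < α) (hb : 0 < b) :
    Tendsto (fun β => ∫ t in Ioc β b, t ^ (-α)) (𝓝[>] 0) atTop := by
  have hlim : Tendsto (fun β : ℝ => (β ^ (1 - α) - b ^ (1 - α)) / (α - 1)) (𝓝[>] 0) atTop :=
    (tendsto_atTop_add_const_right _ _
      (tendsto_rpow_neg_nhdsGT_zero (by linarith))).atTop_div_const (by linarith)
  refine hlim.congr' ?_
  filter_upwards [Ioo_mem_nhdsGT hb] with β hβ
  rw [integral_Ioc_rpow_neg hα hβ.1 hβ.2.le]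

theorem tendsto_rpow_mul_integral_Ioc_rpow_neg {α b : ℝ} (hα : 1 < α) (hb : 0 < b) :
    Tendsto (fun β => β ^ (α - 1) * ∫ t in Ioc β b, t ^ (-α)) (𝓝[>] 0) (𝓝 (1 / (α - 1))) := by
  have hpow : Tendsto (fun β : ℝ => β ^ (α - 1)) (𝓝[>] 0) (𝓝 0) := by
    have h := (Real.continuousAt_rpow_const 0 (α - 1) (Or.inr (by linarith))).tendsto
    rw [Real.zero_rpow (by linarith)] at h
    exact h.mono_left nhdsWithin_le_nhds
  have hlim := ((hpow.mul_const (b ^ (1 - α))).const_sub 1).div_const (α - 1)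
  rw [zero_mul, sub_zero] at hlim
  refine hlim.congr' ?_
  filter_upwards [Ioo_mem_nhdsGT hb] with β hβ
  rw [integral_Ioc_rpow_neg hα hβ.1 hβ.2.le, mul_div_assoc', mul_sub, ← Real.rpow_add hβ.1,
    show α - 1 + (1 - α) = 0 by ring, Real.rpow_zero]

theorem tendsto_rpow_mul_setIntegral_Ioc {f : ℝ → ℝ} {α b c : ℝ} (hα : 1 < α) (hb : 0 < b)
    (hf : ∀ a, 0 < a → IntegrableOn f (Ioc a b))
    (hlim : Tendsto (fun t => t ^ α * f t) (𝓝[>] 0) (𝓝 c)) :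
    Tendsto (fun β => β ^ (α - 1) * ∫ t in Ioc β b, f t) (𝓝[>] 0) (𝓝 (c / (α - 1))) := by
  set g : ℝ → ℝ := fun t => t ^ (-α)
  have hg : ∀ a, 0 < a → IntegrableOn g (Ioc a b) := fun a ha => integrableOn_Ioc_rpow_neg ha b
  have hG := tendsto_rpow_mul_integral_Ioc_rpow_neg hα hb
  have hhg : (fun t => f t - c * g t) =o[𝓝[>] 0] g := by
    have hsmall : (fun t => t ^ α * f t - c) =o[𝓝[>] 0] fun _ => (1 : ℝ) :=
      (isLittleO_one_iff ℝ).2 (by simpa using hlim.sub_const c)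
    refine (hsmall.mul_isBigO (isBigO_refl g _)).congr' ?_ (.of_forall fun t => one_mul (g t))
    filter_upwards [self_mem_nhdsWithin] with t (ht : 0 < t)
    rw [sub_mul, mul_right_comm, ← Real.rpow_add ht, add_neg_cancel, Real.rpow_zero, one_mul]
  have hH := isLittleO_setIntegral_Ioc hb (fun a ha => (hf a ha).sub ((hg a ha).const_mul c)) hg
    (fun _ ht => Real.rpow_nonneg ht.1.le _) (tendsto_integral_Ioc_rpow_neg_atTop hα hb) hhg
  have hH0 : Tendsto (fun β => β ^ (α - 1) * ∫ t in Ioc β b, f t - c * g t) (𝓝[>] 0) (𝓝 0) :=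
    (isLittleO_one_iff ℝ).1
      (((isBigO_refl _ _).mul_isLittleO hH).trans_isBigO (hG.isBigO_one ℝ))
  have hsum := hH0.add (hG.const_mul c)
  rw [zero_add, mul_one_div] at hsum
  refine hsum.congr' ?_
  filter_upwards [self_mem_nhdsWithin] with β (hβ : 0 < β)
  rw [integral_sub (hf β hβ) ((hg β hβ).const_mul c), integral_const_mul]
  ring

theorem stmt6_general (F : Measure ℝ) (p α θp : ℝ) (hp : 1 ≤ p)
    (hsupp : F {x : ℝ | p < |x|} = 0)
    (hlevy : ∫⁻ x, ENNReal.ofReal (min (x ^ 2) 1) ∂F < ⊤)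
    (hα1 : 1 < α)
    (hlim : Tendsto (fun β : ℝ => β ^ α * (F (Ioi β)).toReal) (𝓝[>] 0) (𝓝 θp)) :
    Tendsto (fun β : ℝ => β ^ (α - 1) * ∫ x in Ioi β, x ∂F)
      (𝓝[>] 0) (𝓝 (α * θp / (α - 1))) := by
  have hp0 : 0 < p := by linarith
  have hfin : ∀ β, 0 < β → F (Ioi β) ≠ ⊤ := fun β hβ =>
    (measure_Ioi_lt_top_of_lintegral_min_sq_one F hlevy hβ).ne
  have hFp : F (Ioi p) = 0 :=
    measure_mono_null (fun x (hx : p < x) => hx.trans_le (le_abs_self x)) hsupp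
  have hsum := hlim.add (tendsto_rpow_mul_setIntegral_Ioc hα1 hp0
    (fun a ha => integrableOn_Ioc_toReal_measure_Ioi F (hfin a ha) p) hlim)
  rw [show θp + θp / (α - 1) = α * θp / (α - 1) by
    field_simp [sub_ne_zero.2 hα1.ne']; ring] at hsum
  refine hsum.congr' ?_
  filter_upwards [Ioo_mem_nhdsGT hp0] with β hβ
  rw [setIntegral_Ioi_id_eq_mul_add_integral_Ioc F hβ.1.le hβ.2.le hFp (hfin β hβ.1), mul_add,
    ← mul_assoc, ← Real.rpow_add_one hβ.1.ne', sub_add_cancel]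

/-- Under (H2-α) on the positive side with `α ∈ (1,2)` and `θ₊ > 0`,
`d₊(β) = ∫_{(β,∞)} x F(dx)` satisfies `β^{α-1} d₊(β) → α θ₊/(α-1)` as `β → 0`. -/
theorem stmt6 (F : Measure ℝ) (p α θp : ℝ) (hp : 1 ≤ p)
    (hsupp : F {x : ℝ | p < |x|} = 0)
    (hlevy : ∫⁻ x, ENNReal.ofReal (min (x ^ 2) 1) ∂F < ⊤)
    (hα1 : 1 < α) (hα2 : α < 2) (hθp : 0 < θp)
    (hlim : Tendsto (fun β : ℝ => β ^ α * (F (Ioi β)).toReal) (𝓝[>] 0) (𝓝 θp)) :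
    Tendsto (fun β : ℝ => β ^ (α - 1) * ∫ x in Ioi β, x ∂F)
      (𝓝[>] 0) (𝓝 (α * θp / (α - 1))) :=
  stmt6_general F p α θp hp hsupp hlevy hα1 hlim
end

section
/- Suppose F is supported in [−p,p], and β θ₊(β) → θ₊ > 0 as β → 0 (i.e., α = 1). Then d₊(β)/log(1/β) → θ₊ as β → 0, where d₊(β) = ∫_{(β,∞)} x F(dx). -/
/-!
By the layer-cake formula, `d₊(β) = β θ₊(β) + ∫_β^∞ θ₊(t) dt`. The first term converges,
hence is `o(log(1/β))`. Since `θ₊(t) = θ₊/t + o(1/t)` as `t → 0`, the integral equals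
`θ₊ log(1/β) + o(log(1/β))`: on `[β, δ]` it is within `ε log(δ/β)` of `θ₊ log(δ/β)`, and the
rest is a constant depending only on `δ`.
-/

open MeasureTheory Filter Set Topology

section LayerCake

variable {μ : Measure ℝ} {β : ℝ}

theorem measurable_measure_Ioi : Measurable fun t => μ (Ioi t) :=
  Antitone.measurable fun _ _ hst => measure_mono (Ioi_subset_Ioi hst)

theorem setLIntegral_Ioi_ofReal_eq_mul_add_lintegral_measure_Ioi (hβ : 0 ≤ β) :
    ∫⁻ x in Ioi β, ENNReal.ofReal x ∂μ =
      ENNReal.ofReal β * μ (Ioi β) + ∫⁻ t in Ioi β, μ (Ioi t) := by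
  have hnn : 0 ≤ᵐ[μ.restrict (Ioi β)] fun x : ℝ => x := by
    filter_upwards [ae_restrict_mem measurableSet_Ioi] with x hx
    exact hβ.trans hx.le
  rw [lintegral_eq_lintegral_meas_lt _ hnn measurable_id.aemeasurable,
    ← Ioc_union_Ioi_eq_Ioi hβ, lintegral_union measurableSet_Ioi Ioc_disjoint_Ioi_same]
  have hrestrict (t : ℝ) : μ.restrict (Ioi β) {x | t < x} = μ (Ioi (max β t)) := by
    rw [show {x : ℝ | t < x} = Ioi t from rfl, Measure.restrict_apply measurableSet_Ioi,
      Ioi_inter_Ioi, max_comm]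
  congr 1
  · rw [setLIntegral_congr_fun measurableSet_Ioc
      (fun t ht => by rw [hrestrict, max_eq_left ht.2]),
      setLIntegral_const, Real.volume_Ioc, sub_zero, mul_comm]
  · exact setLIntegral_congr_fun measurableSet_Ioi
      (fun t ht => by rw [hrestrict, max_eq_right (le_of_lt ht)])

theorem integrableOn_Ioi_measure_Ioi_toReal (hβ : 0 ≤ β)
    (hint : IntegrableOn (fun x => x) (Ioi β) μ) :
    IntegrableOn (fun t => (μ (Ioi t)).toReal) (Ioi β) := by
  refine integrable_toReal_of_lintegral_ne_top measurable_measure_Ioi.aemeasurable ?_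
  refine ne_top_of_le_ne_top hint.lintegral_lt_top.ne ?_
  rw [setLIntegral_Ioi_ofReal_eq_mul_add_lintegral_measure_Ioi hβ]
  exact le_add_self

theorem setIntegral_Ioi_id_eq_mul_add_integral_measure_Ioi (hβ : 0 ≤ β)
    (hint : IntegrableOn (fun x => x) (Ioi β) μ) :
    ∫ x in Ioi β, x ∂μ = β * (μ (Ioi β)).toReal + ∫ t in Ioi β, (μ (Ioi t)).toReal := by
  have hnn : 0 ≤ᵐ[μ.restrict (Ioi β)] fun x : ℝ => x := by
    filter_upwards [ae_restrict_mem measurableSet_Ioi] with x hx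
    exact hβ.trans hx.le
  have hfin := hint.lintegral_lt_top
  rw [setLIntegral_Ioi_ofReal_eq_mul_add_lintegral_measure_Ioi hβ, ENNReal.add_lt_top] at hfin
  rw [integral_eq_lintegral_of_nonneg_ae hnn measurable_id.aestronglyMeasurable,
    setLIntegral_Ioi_ofReal_eq_mul_add_lintegral_measure_Ioi hβ,
    ENNReal.toReal_add hfin.1.ne hfin.2.ne, ENNReal.toReal_mul, ENNReal.toReal_ofReal hβ,
    integral_toReal measurable_measure_Ioi.aemeasurable]
  exact ae_lt_top measurable_measure_Ioi hfin.2.ne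

end LayerCake

theorem abs_intervalIntegral_sub_mul_log_le {g : ℝ → ℝ} {c ε β δ : ℝ} (hβ : 0 < β)
    (hβδ : β ≤ δ) (hg : IntervalIntegrable g volume β δ)
    (hclose : ∀ t ∈ Ioc β δ, |t * g t - c| ≤ ε) :
    |(∫ t in β..δ, g t) - c * Real.log (δ / β)| ≤ ε * Real.log (δ / β) := by
  have h0 : (0 : ℝ) ∉ uIcc β δ := by
    rw [uIcc_of_le hβδ]; exact fun h => hβ.not_ge h.1
  have hinv : IntervalIntegrable (fun t : ℝ => t⁻¹) volume β δ :=
    intervalIntegrable_inv_iff.2 (Or.inr h0)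
  rw [← integral_inv h0, ← intervalIntegral.integral_const_mul ε,
    ← intervalIntegral.integral_const_mul c,
    ← intervalIntegral.integral_sub hg (hinv.const_mul c), ← Real.norm_eq_abs]
  refine intervalIntegral.norm_integral_le_of_norm_le hβδ (ae_of_all _ fun t ht' => ?_)
    (hinv.const_mul ε)
  have ht : 0 < t := hβ.trans ht'.1
  rw [Real.norm_eq_abs, show g t - c * t⁻¹ = (t * g t - c) / t by field_simp, abs_div,
    abs_of_pos ht, div_eq_mul_inv]
  exact mul_le_mul_of_nonneg_right (hclose t ht') (inv_nonneg.2 ht.le)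

theorem isLittleO_setIntegral_Ioi_sub_mul_log_of_tendsto_mul {g : ℝ → ℝ} {c : ℝ}
    (hg : ∀ β > 0, IntegrableOn g (Ioi β))
    (hlim : Tendsto (fun t => t * g t) (𝓝[>] 0) (𝓝 c)) :
    (fun β => (∫ t in Ioi β, g t) - c * Real.log (1 / β)) =o[𝓝[>] 0]
      fun β => Real.log (1 / β) := by
  refine Asymptotics.isLittleO_iff.2 fun ε hε => ?_
  obtain ⟨δ, hδ, hclose⟩ := mem_nhdsGT_iff_exists_Ioc_subset.1
    (Metric.tendsto_nhds.1 hlim (ε / 2) (half_pos hε))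
  set M := |∫ t in Ioi δ, g t| + |c * Real.log δ| + ε / 2 * |Real.log δ| with hM_def
  have hL := tendsto_log_one_div_nhdsGT_zero
  filter_upwards [Ioo_mem_nhdsGT hδ, hL.eventually_ge_atTop (2 / ε * M),
    hL.eventually_ge_atTop 0] with β ⟨hβ, hβδ⟩ hML hL0
  have hlog : Real.log (δ / β) = Real.log δ + Real.log (1 / β) := by
    rw [Real.log_div hδ.ne' hβ.ne', one_div, Real.log_inv, sub_eq_add_neg]
  have hsplit : ∫ t in Ioi β, g t = (∫ t in β..δ, g t) + ∫ t in Ioi δ, g t :=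
    (intervalIntegral.integral_interval_add_Ioi (hg β hβ) (hg δ hδ)).symm
  have hnear : |(∫ t in β..δ, g t) - c * Real.log (δ / β)| ≤ ε / 2 * Real.log (δ / β) :=
    abs_intervalIntegral_sub_mul_log_le hβ hβδ.le
      ((intervalIntegrable_iff_integrableOn_Ioc_of_le hβδ.le).2
        ((hg β hβ).mono_set Ioc_subset_Ioi_self))
      fun t ht => le_of_lt (by simpa [Real.dist_eq] using hclose ⟨hβ.trans ht.1, ht.2⟩)
  have hM : 2 * M ≤ ε * Real.log (1 / β) := by
    rw [div_mul_eq_mul_div, div_le_iff₀ hε] at hML; linarith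
  have hlogδ : ε / 2 * Real.log δ ≤ ε / 2 * |Real.log δ| :=
    mul_le_mul_of_nonneg_left (le_abs_self _) (half_pos hε).le
  rw [Real.norm_eq_abs, Real.norm_eq_abs, abs_of_nonneg hL0]
  calc |(∫ t in Ioi β, g t) - c * Real.log (1 / β)|
      = |((∫ t in β..δ, g t) - c * Real.log (δ / β)) +
          (c * Real.log δ + ∫ t in Ioi δ, g t)| := by
        rw [hsplit, hlog]; ring_nf
    _ ≤ ε / 2 * Real.log (δ / β) + (|c * Real.log δ| + |∫ t in Ioi δ, g t|) :=
        (abs_add_le _ _).trans (add_le_add hnear (abs_add_le _ _))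
    _ ≤ ε * Real.log (1 / β) := by
        rw [hlog]; linarith

theorem tendsto_setIntegral_Ioi_div_log_of_tendsto_mul {g : ℝ → ℝ} {c : ℝ}
    (hg : ∀ β > 0, IntegrableOn g (Ioi β))
    (hlim : Tendsto (fun t => t * g t) (𝓝[>] 0) (𝓝 c)) :
    Tendsto (fun β => (∫ t in Ioi β, g t) / Real.log (1 / β)) (𝓝[>] 0) (𝓝 c) := by
  have h := (isLittleO_setIntegral_Ioi_sub_mul_log_of_tendsto_mul hg hlim).tendsto_div_nhds_zero
  refine (zero_add c ▸ h.add_const c).congr' ?_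
  filter_upwards [tendsto_log_one_div_nhdsGT_zero.eventually_ne_atTop 0] with β hβ
  field_simp
  ring

theorem measure_Ioi_ne_top_of_lintegral_min_sq_one_ne_top {μ : Measure ℝ}
    (hμ : ∫⁻ x, ENNReal.ofReal (min (x ^ 2) 1) ∂μ ≠ ⊤) {β : ℝ} (hβ : 0 < β) :
    μ (Ioi β) ≠ ⊤ := by
  have hc : ENNReal.ofReal (min (β ^ 2) 1) ≠ 0 := by positivity
  refine ne_top_of_le_ne_top (ENNReal.div_ne_top hμ hc) (le_trans (measure_mono ?_)
    (meas_ge_le_lintegral_div (by fun_prop) hc ENNReal.ofReal_ne_top))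
  intro x hx
  exact ENNReal.ofReal_le_ofReal (min_le_min_right 1 (pow_le_pow_left₀ hβ.le (le_of_lt hx) 2))

theorem integrableOn_Ioi_id_of_measure_abs_gt_eq_zero {μ : Measure ℝ} {p β : ℝ}
    (hμ : μ {x | p < |x|} = 0) (hβ : μ (Ioi β) ≠ ⊤) :
    IntegrableOn (fun x => x) (Ioi β) μ := by
  refine Measure.integrableOn_of_bounded hβ measurable_id.aestronglyMeasurable (M := p) ?_
  refine ae_restrict_of_ae (measure_eq_zero_iff_ae_notMem.1 hμ |>.mono fun x hx => ?_)
  simpa using hx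

theorem stmt7_general (F : Measure ℝ) (p θp : ℝ)
    (hsupp : F {x : ℝ | p < |x|} = 0)
    (hlevy : ∫⁻ x, ENNReal.ofReal (min (x ^ 2) 1) ∂F < ⊤)
    (hlim : Tendsto (fun β : ℝ => β * (F (Ioi β)).toReal) (𝓝[>] 0) (𝓝 θp)) :
    Tendsto (fun β : ℝ => (∫ x in Ioi β, x ∂F) / Real.log (1 / β))
      (𝓝[>] 0) (𝓝 θp) := by
  have hint (β : ℝ) (hβ : 0 < β) : IntegrableOn (fun x => x) (Ioi β) F :=
    integrableOn_Ioi_id_of_measure_abs_gt_eq_zero hsupp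
      (measure_Ioi_ne_top_of_lintegral_min_sq_one_ne_top hlevy.ne hβ)
  have hboundary : Tendsto (fun β : ℝ => β * (F (Ioi β)).toReal / Real.log (1 / β))
      (𝓝[>] 0) (𝓝 0) :=
    hlim.div_atTop tendsto_log_one_div_nhdsGT_zero
  have hbulk := tendsto_setIntegral_Ioi_div_log_of_tendsto_mul
    (fun β hβ => integrableOn_Ioi_measure_Ioi_toReal hβ.le (hint β hβ)) hlim
  refine (zero_add θp ▸ hboundary.add hbulk).congr' ?_
  filter_upwards [self_mem_nhdsWithin] with β hβ
  rw [setIntegral_Ioi_id_eq_mul_add_integral_measure_Ioi hβ.le (hint β hβ), add_div]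

/-- Under (H2-1) on the positive side with `θ₊ > 0`,
`d₊(β) = ∫_{(β,∞)} x F(dx)` satisfies `d₊(β)/log(1/β) → θ₊` as `β → 0`. -/
theorem stmt7 (F : Measure ℝ) (p θp : ℝ) (hp : 1 ≤ p)
    (hsupp : F {x : ℝ | p < |x|} = 0)
    (hlevy : ∫⁻ x, ENNReal.ofReal (min (x ^ 2) 1) ∂F < ⊤)
    (hθp : 0 < θp)
    (hlim : Tendsto (fun β : ℝ => β * (F (Ioi β)).toReal) (𝓝[>] 0) (𝓝 θp)) :
    Tendsto (fun β : ℝ => (∫ x in Ioi β, x ∂F) / Real.log (1 / β))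
      (𝓝[>] 0) (𝓝 θp) :=
  stmt7_general F p θp hsupp hlevy hlim
end

section
/- Suppose F is supported in [−p,p], and β θ₊(β) → θ₊ as β → 0 (α = 1 case). Then for every fixed a ∈ (0,1], (1/(log(1/β))²) ∫_{(β,a]} x log x F(dx) → −θ₊/2 as β → 0. -/
open MeasureTheory Filter Set Topology

/-!
Integrating by parts against the tail `θ₊(t) = F((t, ∞))`, i.e. applying Fubini to
`x log x = β log β + ∫_β^x (log t + 1) dt`, gives
`∫_{(β,a]} x log x F(dx) = β log β θ₊(β) - a log a θ₊(a) + ∫_β^a (log t + 1) θ₊(t) dt`.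
The boundary terms are `O(log (1/β))` because `β θ₊(β)` is bounded. Near `0` the integrand is
`(log t + 1) / t · (t θ₊(t))` with `t θ₊(t) → θ₊`, and
`∫_β^δ (log t + 1) / t dt = -(log β)² / 2 + O(log (1/β))`; taking `δ ≤ 1/e` makes
`log t + 1 ≤ 0` on `(0, δ]`, so the error `t θ₊(t) - θ₊` is integrated against a weight of
constant sign.
-/

open Real

lemma measure_Ioi_ne_top_of_lintegral_min_sq_one_lt_top {μ : Measure ℝ}
    (hμ : ∫⁻ x, ENNReal.ofReal (min (x ^ 2) 1) ∂μ < ⊤) {b : ℝ} (hb : 0 < b) :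
    μ (Ioi b) ≠ ⊤ := by
  set c := ENNReal.ofReal (min (b ^ 2) 1)
  have hc : c ≠ 0 := (ENNReal.ofReal_pos.2 (lt_min (by positivity) one_pos)).ne'
  have hsub : Ioi b ⊆ {x | c ≤ ENNReal.ofReal (min (x ^ 2) 1)} := fun x hx =>
    ENNReal.ofReal_le_ofReal (min_le_min_right _ (pow_le_pow_left₀ hb.le (le_of_lt hx) 2))
  have hmarkov := mul_meas_ge_le_lintegral₀ (μ := μ)
    (by fun_prop : Measurable fun x : ℝ => ENNReal.ofReal (min (x ^ 2) 1)).aemeasurable c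
  exact (measure_mono hsub).trans_lt
    (ENNReal.lt_top_of_mul_ne_top_right (hmarkov.trans_lt hμ).ne hc) |>.ne

section TailIntegration

variable {μ : Measure ℝ} {b c : ℝ}

lemma integrableOn_mul_measureReal_Ioi {g : ℝ → ℝ} (hμ : μ (Ioi b) ≠ ⊤)
    (hg : IntegrableOn g (Ioc b c)) :
    IntegrableOn (fun t => g t * μ.real (Ioi t)) (Ioc b c) := by
  have hmeas : Measurable fun t => μ.real (Ioi t) :=
    (Antitone.measurable fun s t hst => measure_mono (Ioi_subset_Ioi hst)).ennreal_toReal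
  refine hg.mul_bdd hmeas.aestronglyMeasurable (c := μ.real (Ioi b)) ?_
  filter_upwards [ae_restrict_mem measurableSet_Ioc] with t ht
  rw [Real.norm_of_nonneg measureReal_nonneg]
  exact measureReal_mono (Ioi_subset_Ioi ht.1.le) hμ

lemma measureReal_Ioc_eq_sub {s t : ℝ} (hst : s ≤ t) (hμ : μ (Ioi s) ≠ ⊤) :
    μ.real (Ioc s t) = μ.real (Ioi s) - μ.real (Ioi t) := by
  rw [← Ioi_sdiff_Ioi, measureReal_sdiff (Ioi_subset_Ioi hst) measurableSet_Ioi hμ]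

theorem setIntegral_Ioc_eq_integral_mul_measureReal_Ioi {G g : ℝ → ℝ} (hbc : b ≤ c)
    (hμ : μ (Ioi b) ≠ ⊤) (hG : ContinuousOn G (Icc b c))
    (hG' : ∀ t ∈ Ioo b c, HasDerivAt G (g t) t) (hg : IntegrableOn g (Ioc b c)) :
    ∫ x in Ioc b c, G x ∂μ =
      G b * μ.real (Ioi b) - G c * μ.real (Ioi c) + ∫ t in Ioc b c, g t * μ.real (Ioi t) := by
  have hftc : ∀ x ∈ Icc b c, ∫ t in Ioc b x, g t = G x - G b := fun x hx => by
    rw [← intervalIntegral.integral_of_le hx.1]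
    exact intervalIntegral.integral_eq_sub_of_hasDerivAt_of_le hx.1
      (hG.mono (Icc_subset_Icc_right hx.2)) (fun t ht => hG' t ⟨ht.1, ht.2.trans_le hx.2⟩)
      ((intervalIntegrable_iff_integrableOn_Ioc_of_le hx.1).2
        (hg.mono_set (Ioc_subset_Ioc_right hx.2)))
  have hμbc : μ (Ioc b c) ≠ ⊤ := ne_top_of_le_ne_top hμ (measure_mono Ioc_subset_Ioi_self)
  have : IsFiniteMeasure (μ.restrict (Ioc b c)) := isFiniteMeasure_restrict.2 hμbc
  set k : ℝ × ℝ → ℝ := {p | p.2 < p.1}.indicator (fun p => g p.2)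
  have hk : Integrable k ((μ.restrict (Ioc b c)).prod (volume.restrict (Ioc b c))) :=
    (hg.integrable.comp_snd _).indicator (measurableSet_lt measurable_snd measurable_fst)
  have hinner_t : ∀ x ∈ Ioc b c, ∫ t in Ioc b c, k (x, t) = G x - G b := fun x hx => by
    change ∫ t in Ioc b c, (Iio x).indicator g t = _
    rw [setIntegral_indicator measurableSet_Iio,
      show Ioc b c ∩ Iio x = Ioo b x by ext; simp; grind,
      ← integral_Ioc_eq_integral_Ioo, hftc x (Ioc_subset_Icc_self hx)]
  have hinner_x : ∀ t ∈ Ioc b c,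
      ∫ x in Ioc b c, k (x, t) ∂μ = g t * (μ.real (Ioi t) - μ.real (Ioi c)) := fun t ht => by
    change ∫ x in Ioc b c, (Ioi t).indicator (fun _ => g t) x ∂μ = _
    rw [setIntegral_indicator measurableSet_Ioi, setIntegral_const, smul_eq_mul, mul_comm,
      show Ioc b c ∩ Ioi t = Ioc t c by ext; simp; grind,
      measureReal_Ioc_eq_sub ht.2 (ne_top_of_le_ne_top hμ (measure_mono (Ioi_subset_Ioi ht.1.le)))]
  calc ∫ x in Ioc b c, G x ∂μ
      = ∫ x in Ioc b c, (G b + ∫ t in Ioc b c, k (x, t)) ∂μ := by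
        refine setIntegral_congr_fun measurableSet_Ioc fun x hx => ?_
        rw [hinner_t x hx]; ring
    _ = G b * μ.real (Ioc b c) + ∫ t in Ioc b c, ∫ x in Ioc b c, k (x, t) ∂μ := by
        rw [integral_add (integrable_const _) hk.integral_prod_left, setIntegral_const,
          smul_eq_mul, mul_comm, integral_integral_swap (f := fun x t => k (x, t)) hk]
    _ = G b * μ.real (Ioc b c) +
          ∫ t in Ioc b c, (g t * μ.real (Ioi t) - μ.real (Ioi c) * g t) := by
        congr 1
        refine setIntegral_congr_fun measurableSet_Ioc fun t ht => ?_
        rw [hinner_x t ht]; ring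
    _ = _ := by
        rw [integral_sub (integrableOn_mul_measureReal_Ioi hμ hg) (hg.const_mul _),
          integral_const_mul, hftc c (right_mem_Icc.2 hbc), measureReal_Ioc_eq_sub hbc hμ]
        ring

end TailIntegration

lemma continuousOn_log_add_one_div {β δ : ℝ} (hβ : 0 < β) :
    ContinuousOn (fun t => (log t + 1) / t) (Icc β δ) := by
  have hne : ∀ t ∈ Icc β δ, t ≠ 0 := fun t ht => (hβ.trans_le ht.1).ne'
  exact ((continuousOn_log.mono hne).add continuousOn_const).div continuousOn_id hne

lemma integrableOn_log_add_one {β δ : ℝ} (hβ : 0 < β) :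
    IntegrableOn (fun t => log t + 1) (Ioc β δ) := by
  refine (ContinuousOn.integrableOn_Icc ?_).mono_set Ioc_subset_Icc_self
  exact (continuousOn_log.mono fun t ht => (hβ.trans_le ht.1).ne').add continuousOn_const

lemma integral_Ioc_log_add_one_div {β δ : ℝ} (hβ : 0 < β) (hβδ : β ≤ δ) :
    ∫ t in Ioc β δ, (log t + 1) / t =
      (log δ ^ 2 / 2 + log δ) - (log β ^ 2 / 2 + log β) := by
  rw [← intervalIntegral.integral_of_le hβδ]
  refine intervalIntegral.integral_eq_sub_of_hasDerivAt_of_le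
    (f := fun t => log t ^ 2 / 2 + log t) hβδ ?_ (fun t ht => ?_)
    ((continuousOn_log_add_one_div hβ).intervalIntegrable_of_Icc hβδ)
  · have hne : ∀ t ∈ Icc β δ, t ≠ 0 := fun t ht => (hβ.trans_le ht.1).ne'
    exact (((continuousOn_log.mono hne).pow 2).div_const 2).add (continuousOn_log.mono hne)
  · have ht0 : t ≠ 0 := (hβ.trans ht.1).ne'
    convert (((hasDerivAt_log ht0).fun_pow 2).div_const 2).fun_add (hasDerivAt_log ht0) using 1
    norm_num
    field_simp

lemma tendsto_inv_log_nhdsGT_zero : Tendsto (fun β => (log β)⁻¹) (𝓝[>] 0) (𝓝 0) :=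
  tendsto_inv_atBot_zero.comp tendsto_log_nhdsGT_zero

lemma abs_setIntegral_log_add_one_mul_sub_le {θ : ℝ → ℝ} {κ ε β δ : ℝ} (hβ : 0 < β)
    (hβδ : β ≤ δ) (hδ : δ ≤ exp (-1)) (hθ : ∀ t ∈ Ioc β δ, |t * θ t - κ| ≤ ε)
    (hint : IntegrableOn (fun t => (log t + 1) * θ t) (Ioc β δ)) :
    |(∫ t in Ioc β δ, (log t + 1) * θ t)
        - κ * ((log δ ^ 2 / 2 + log δ) - (log β ^ 2 / 2 + log β))|
      ≤ ε * ((log β ^ 2 / 2 + log β) - (log δ ^ 2 / 2 + log δ)) := by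
  have hw : IntegrableOn (fun t => (log t + 1) / t) (Ioc β δ) :=
    ((continuousOn_log_add_one_div hβ).integrableOn_Icc).mono_set Ioc_subset_Icc_self
  rw [show (log β ^ 2 / 2 + log β) - (log δ ^ 2 / 2 + log δ) =
        ∫ t in Ioc β δ, -((log t + 1) / t) by
      rw [integral_neg, integral_Ioc_log_add_one_div hβ hβδ, neg_sub],
    ← integral_Ioc_log_add_one_div hβ hβδ,
    ← integral_const_mul κ (fun t => (log t + 1) / t), ← integral_sub hint (hw.const_mul κ),
    ← integral_const_mul ε (fun t => -((log t + 1) / t)), ← Real.norm_eq_abs]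
  refine norm_integral_le_of_norm_le (hw.neg.const_mul ε) ?_
  filter_upwards [ae_restrict_mem measurableSet_Ioc] with t ht
  have ht0 : 0 < t := hβ.trans ht.1
  have hw_nonpos : (log t + 1) / t ≤ 0 :=
    div_nonpos_of_nonpos_of_nonneg (by linarith [(log_le_iff_le_exp ht0).2 (ht.2.trans hδ)])
      ht0.le
  rw [show (log t + 1) * θ t - κ * ((log t + 1) / t) = (log t + 1) / t * (t * θ t - κ) by
      field_simp,
    norm_mul, Real.norm_of_nonpos hw_nonpos, Real.norm_eq_abs, mul_comm ε]
  exact mul_le_mul_of_nonneg_left (hθ t ht) (neg_nonneg.2 hw_nonpos)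

lemma exists_forall_Ioc_abs_sub_le_of_tendsto {f : ℝ → ℝ} {κ ε c : ℝ}
    (hf : Tendsto f (𝓝[>] 0) (𝓝 κ)) (hε : 0 < ε) (hc : 0 < c) :
    ∃ δ ∈ Ioc 0 c, ∀ t ∈ Ioc 0 δ, |f t - κ| ≤ ε := by
  have hev : ∀ᶠ t in 𝓝[>] 0, t ≤ c ∧ |f t - κ| ≤ ε :=
    (eventually_nhdsWithin_of_eventually_nhds (eventually_le_nhds hc)).and
      (hf.eventually (Metric.closedBall_mem_nhds κ hε))
  obtain ⟨δ, hδ, hsub⟩ := mem_nhdsGT_iff_exists_Ioc_subset.1 hev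
  exact ⟨δ, ⟨hδ, (hsub ⟨hδ, le_rfl⟩).1⟩, fun t ht => (hsub ht).2⟩

theorem tendsto_setIntegral_log_add_one_mul_div_log_sq {θ : ℝ → ℝ} {κ a : ℝ} (ha : 0 < a)
    (hθ : Tendsto (fun t => t * θ t) (𝓝[>] 0) (𝓝 κ))
    (hint : ∀ᶠ β in 𝓝[>] 0, IntegrableOn (fun t => (log t + 1) * θ t) (Ioc β a)) :
    Tendsto (fun β => (∫ t in Ioc β a, (log t + 1) * θ t) / log β ^ 2) (𝓝[>] 0)
      (𝓝 (-(κ / 2))) := by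
  rw [Metric.tendsto_nhds]
  intro ε hε
  obtain ⟨δ, ⟨hδ, hδc⟩, hθδ⟩ :=
    exists_forall_Ioc_abs_sub_le_of_tendsto hθ (half_pos hε) (lt_min ha (exp_pos (-1)))
  have hδa : δ ≤ a := hδc.trans (min_le_left _ _)
  have hδe : δ ≤ exp (-1) := hδc.trans (min_le_right _ _)
  set C := ∫ t in Ioc δ a, (log t + 1) * θ t
  set Wδ := log δ ^ 2 / 2 + log δ
  -- `r (log β)⁻¹` bounds the distance to `-κ/2`, using `(log β ^ 2 / 2 + log β) u² = 1/2 + u`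
  -- for `u = (log β)⁻¹`.
  set r : ℝ → ℝ := fun u =>
    |(κ * Wδ + C) * u ^ 2 - κ * u| + ε / 2 * (1 / 2 + u - Wδ * u ^ 2)
  have hr : Tendsto (fun β => r (log β)⁻¹) (𝓝[>] 0) (𝓝 (ε / 4)) := by
    have hcont : Continuous r := by fun_prop
    have h0 : r 0 = ε / 4 := by
      simp only [r]
      norm_num
      ring
    exact h0 ▸ (hcont.tendsto 0).comp tendsto_inv_log_nhdsGT_zero
  filter_upwards [hr.eventually (gt_mem_nhds (by linarith : ε / 4 < ε)), Ioo_mem_nhdsGT hδ, hint]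
    with β hrβ hβ hβint
  have hlogβ : log β ≠ 0 :=
    (log_neg hβ.1 (hβ.2.trans_le (hδe.trans (exp_le_one_iff.2 (by norm_num))))).ne
  have hsplit :
      ∫ t in Ioc β a, (log t + 1) * θ t = (∫ t in Ioc β δ, (log t + 1) * θ t) + C := by
    rw [← setIntegral_union (Ioc_disjoint_Ioc_of_le le_rfl) measurableSet_Ioc
      (hβint.mono_set (Ioc_subset_Ioc_right hδa))
      (hβint.mono_set (Ioc_subset_Ioc_left hβ.2.le)),
      Ioc_union_Ioc_eq_Ioc hβ.2.le hδa]
  have hE := abs_setIntegral_log_add_one_mul_sub_le hβ.1 hβ.2.le hδe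
    (fun t ht => hθδ t ⟨hβ.1.trans ht.1, ht.2⟩) (hβint.mono_set (Ioc_subset_Ioc_right hδa))
  set E := (∫ t in Ioc β δ, (log t + 1) * θ t) - κ * (Wδ - (log β ^ 2 / 2 + log β))
  calc dist ((∫ t in Ioc β a, (log t + 1) * θ t) / log β ^ 2) (-(κ / 2))
      = |((κ * Wδ + C) * (log β)⁻¹ ^ 2 - κ * (log β)⁻¹) + E * (log β)⁻¹ ^ 2| := by
        rw [Real.dist_eq, hsplit]
        congr 1
        field_simp
        ring
    _ ≤ |(κ * Wδ + C) * (log β)⁻¹ ^ 2 - κ * (log β)⁻¹| + |E| * (log β)⁻¹ ^ 2 := by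
        refine (abs_add_le _ _).trans_eq ?_
        rw [abs_mul, abs_pow, sq_abs]
    _ ≤ |(κ * Wδ + C) * (log β)⁻¹ ^ 2 - κ * (log β)⁻¹|
          + ε / 2 * ((log β ^ 2 / 2 + log β) - Wδ) * (log β)⁻¹ ^ 2 := by gcongr
    _ = r (log β)⁻¹ := by
        simp only [r]
        field_simp
    _ < ε := hrβ

theorem stmt8_general (F : Measure ℝ) (θp a : ℝ)
    (hlevy : ∫⁻ x, ENNReal.ofReal (min (x ^ 2) 1) ∂F < ⊤)
    (ha : a ∈ Ioc (0:ℝ) 1)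
    (hlim : Tendsto (fun β : ℝ => β * (F (Ioi β)).toReal) (𝓝[>] 0) (𝓝 θp)) :
    Tendsto (fun β : ℝ =>
        (1 / (Real.log (1 / β)) ^ 2) * ∫ x in Ioc β a, x * Real.log x ∂F)
      (𝓝[>] 0) (𝓝 (-(θp / 2))) := by
  have hfin : ∀ b > 0, F (Ioi b) ≠ ⊤ := fun b hb =>
    measure_Ioi_ne_top_of_lintegral_min_sq_one_lt_top hlevy hb
  have hmain := tendsto_setIntegral_log_add_one_mul_div_log_sq (θ := fun t => F.real (Ioi t)) ha.1
    hlim (eventually_nhdsWithin_of_forall fun β hβ =>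
      integrableOn_mul_measureReal_Ioi (hfin β hβ) (integrableOn_log_add_one hβ))
  have hu := tendsto_inv_log_nhdsGT_zero
  have hsum := (hmain.add (hlim.mul hu)).sub ((hu.pow 2).const_mul (a * log a * F.real (Ioi a)))
  rw [mul_zero, add_zero, zero_pow two_ne_zero, mul_zero, sub_zero] at hsum
  refine hsum.congr' ?_
  filter_upwards [Ioo_mem_nhdsGT ha.1] with β hβ
  have hlogβ : log β ≠ 0 := (log_neg hβ.1 (hβ.2.trans_le ha.2)).ne
  rw [setIntegral_Ioc_eq_integral_mul_measureReal_Ioi hβ.2.le (hfin β hβ.1)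
      continuous_mul_log.continuousOn (fun t ht => hasDerivAt_mul_log (hβ.1.trans ht.1).ne')
      (integrableOn_log_add_one hβ.1), one_div β, log_inv, neg_sq]
  simp only [measureReal_def]
  field_simp
  ring

/-- Under (H2-1) on the positive side (`β θ₊(β) → θ₊ ≥ 0`), for every fixed `a ∈ (0,1]`,
`(1/(log(1/β))²) ∫_{(β,a]} x log x F(dx) → −θ₊/2` as `β → 0`. -/
theorem stmt8 (F : Measure ℝ) (p θp a : ℝ) (hp : 1 ≤ p)
    (hsupp : F {x : ℝ | p < |x|} = 0)
    (hlevy : ∫⁻ x, ENNReal.ofReal (min (x ^ 2) 1) ∂F < ⊤)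
    (hθp : 0 ≤ θp) (ha : a ∈ Ioc (0:ℝ) 1)
    (hlim : Tendsto (fun β : ℝ => β * (F (Ioi β)).toReal) (𝓝[>] 0) (𝓝 θp)) :
    Tendsto (fun β : ℝ =>
        (1 / (Real.log (1 / β)) ^ 2) * ∫ x in Ioc β a, x * Real.log x ∂F)
      (𝓝[>] 0) (𝓝 (-(θp / 2))) :=
  stmt8_general F θp a hlevy ha hlim
end

section
/- Assume F is supported in [−p,p], α ∈ (1,2), β^α F((β,∞)) → θ₊ and β^α F((−∞,−β)) → θ₋ as β→0 with θ = θ₊+θ₋ > 0, and let u_n = (n/log n)^{1/α}, β_n = log n / n^{1/(2α)}. Define the measures K_n(A) = (1/n) ∫_{{|x|>β_n}} F(dx) ∫_{{|y|≤β_n}} F(dy) 1_A(u_n x y). Then for every w > 0, K_n((w,∞)) → (θ₊² + θ₋²)/(2 w^α). -/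
open MeasureTheory Filter Set Topology intervalIntegral
open scoped Interval



lemma tail_fin (μ : Measure ℝ) (hlevy : ∫⁻ x, ENNReal.ofReal (min (x ^ 2) 1) ∂μ < ⊤)
    {s : ℝ} (hs : 0 < s) : μ {x : ℝ | s < |x|} ≠ ⊤ := by
  set c := ENNReal.ofReal (min (s ^ 2) 1) with hc
  have hc0 : c ≠ 0 := by
    simp only [hc, ne_eq, ENNReal.ofReal_eq_zero, not_le]
    exact lt_min (by positivity) one_pos
  have hkey : c * μ {x : ℝ | s < |x|} ≤ ∫⁻ x, ENNReal.ofReal (min (x ^ 2) 1) ∂μ := by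
    rw [← setLIntegral_const]
    refine le_trans (setLIntegral_mono (by fun_prop) ?_) (setLIntegral_le_lintegral _ _)
    intro x hx
    apply ENNReal.ofReal_le_ofReal
    have h1 : s ^ 2 ≤ x ^ 2 := by
      have h2 := pow_le_pow_left₀ hs.le (le_of_lt hx) 2
      rwa [sq_abs] at h2
    exact min_le_min h1 le_rfl
  intro htop
  rw [htop, ENNReal.mul_top hc0] at hkey
  exact absurd (hkey.trans_lt hlevy) (lt_irrefl ⊤)

lemma squeezeEps {A : ℕ → ℝ} {L : ℝ}
    (h : ∀ ε : ℝ, 0 < ε → ∀ᶠ n in atTop, L - ε ≤ A n ∧ A n ≤ L + ε) :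
    Tendsto A atTop (𝓝 L) := by
  rw [Metric.tendsto_atTop]
  intro ε hε
  obtain ⟨N, hN⟩ := (h (ε/2) (by linarith)).exists_forall_of_atTop
  exact ⟨N, fun n hn => by
    have := hN n hn
    rw [Real.dist_eq, abs_sub_lt_iff]
    constructor <;> linarith⟩

lemma karamata (μ : Measure ℝ) {p α θ : ℝ} (hα1 : 1 < α) (hp : 1 ≤ p)
    (hsupp : μ (Ioi p) = 0) (hfin : ∀ s : ℝ, 0 < s → μ (Ioi s) ≠ ⊤)
    (hθ : Tendsto (fun s : ℝ => s ^ α * (μ (Ioi s)).toReal) (𝓝[>] 0) (𝓝 θ))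
    {b : ℕ → ℝ} (hbpos : ∀ᶠ n in atTop, 0 < b n) (hb0 : Tendsto b atTop (𝓝 0))
    (hblog : Tendsto (fun n : ℕ => Real.log (b n) / Real.log (n : ℝ)) atTop (𝓝 (-(1/(2*α)))))
    (hlogtop : Tendsto (fun n : ℕ => Real.log (n : ℝ)) atTop atTop) :
    Tendsto (fun n : ℕ =>
        (∫⁻ x in Ioi (b n), ENNReal.ofReal (x ^ α) ∂μ).toReal / Real.log (n : ℝ))
      atTop (𝓝 (θ / 2)) := by
  have hα0 : 0 < α := lt_trans one_pos hα1
  have hθnn : 0 ≤ θ := by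
    refine ge_of_tendsto hθ ?_
    filter_upwards [self_mem_nhdsWithin] with s hs
    have : (0:ℝ) < s := hs
    positivity
  -- layer cake formula
  have layer : ∀ n : ℕ, 0 < b n →
      ∫⁻ x in Ioi (b n), ENNReal.ofReal (x ^ α) ∂μ
        = ∫⁻ t in Ioi 0, μ (Ioi (max (b n) t)) * ENNReal.ofReal (α * t ^ (α - 1)) := by
    intro n hbn
    have f_nn : 0 ≤ᵐ[μ.restrict (Ioi (b n))] fun x : ℝ => x := by
      filter_upwards [ae_restrict_mem measurableSet_Ioi] with x hx
      exact (hbn.trans hx).le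
    have g_intble : ∀ t > (0:ℝ), IntervalIntegrable (fun t => α * t ^ (α - 1)) volume 0 t :=
      fun t _ => (intervalIntegrable_rpow' (by linarith)).const_mul α
    have g_nn : ∀ᵐ t ∂(volume.restrict (Ioi (0:ℝ))), 0 ≤ α * t ^ (α - 1) := by
      filter_upwards [ae_restrict_mem measurableSet_Ioi] with t ht
      have : (0:ℝ) < t := ht
      positivity
    have key := lintegral_comp_eq_lintegral_meas_lt_mul (μ.restrict (Ioi (b n)))
      f_nn aemeasurable_id g_intble g_nn
    calc ∫⁻ x in Ioi (b n), ENNReal.ofReal (x ^ α) ∂μ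
        = ∫⁻ x in Ioi (b n), ENNReal.ofReal (∫ t in (0:ℝ)..x, α * t ^ (α - 1)) ∂μ := by
          refine setLIntegral_congr_fun measurableSet_Ioi (fun x hx => ?_)
          have hx0 : (0:ℝ) < x := hbn.trans hx
          rw [intervalIntegral.integral_const_mul,
            integral_rpow (Or.inl (by linarith : (-1:ℝ) < α - 1))]
          have h1 : α - 1 + 1 = α := by ring
          rw [h1, Real.zero_rpow (ne_of_gt hα0)]
          field_simp
          rw [sub_zero]
      _ = ∫⁻ t in Ioi 0, (μ.restrict (Ioi (b n))) {a : ℝ | t < a}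
            * ENNReal.ofReal (α * t ^ (α - 1)) := key
      _ = ∫⁻ t in Ioi 0, μ (Ioi (max (b n) t)) * ENNReal.ofReal (α * t ^ (α - 1)) := by
          refine lintegral_congr fun t => ?_
          have : {a : ℝ | t < a} = Ioi t := rfl
          rw [this, Measure.restrict_apply measurableSet_Ioi, Ioi_inter_Ioi, sup_comm]

  apply squeezeEps
  intro ε hε
  obtain ⟨δ, hδpos, hδ⟩ := Metric.tendsto_nhdsWithin_nhds.mp hθ ε hε
  set δ₀ : ℝ := min (δ/2) 1 with hδ₀def
  have hδ₀pos : 0 < δ₀ := lt_min (by linarith) one_pos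
  have hδ₀1 : δ₀ ≤ 1 := min_le_right _ _
  have hδ₀ : ∀ s : ℝ, 0 < s → s ≤ δ₀ → |s ^ α * (μ (Ioi s)).toReal - θ| ≤ ε := by
    intro s hs hsle
    have h2 := hδ (mem_Ioi.2 hs) (by
      rw [Real.dist_eq, sub_zero, abs_of_pos hs]
      calc s ≤ δ₀ := hsle
        _ ≤ δ/2 := min_le_left _ _
        _ < δ := by linarith)
    rw [Real.dist_eq] at h2
    exact h2.le
  set D : ENNReal := μ (Ioi δ₀) * ENNReal.ofReal (p ^ α) with hDdef
  have hDtop : D ≠ ⊤ := ENNReal.mul_ne_top (hfin δ₀ hδ₀pos) ENNReal.ofReal_ne_top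
  -- lintegral of c * α * (1/t)
  have lint_one_div : ∀ c a₁ a₂ : ℝ, 0 ≤ c → 0 < a₁ → a₁ ≤ a₂ →
      ∫⁻ t in Ioc a₁ a₂, ENNReal.ofReal (c * α * (1/t)) ∂volume
        = ENNReal.ofReal (c * α * (Real.log a₂ - Real.log a₁)) := by
    intro c a₁ a₂ hc ha₁ ha₁₂
    have ha₂ : 0 < a₂ := lt_of_lt_of_le ha₁ ha₁₂
    have hnz : ∀ x : ℝ, x ∈ [[a₁, a₂]] → x ≠ 0 := by
      intro x hx
      rw [uIcc_of_le ha₁₂] at hx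
      exact ne_of_gt (lt_of_lt_of_le ha₁ hx.1)
    rw [← ofReal_integral_eq_lintegral_ofReal]
    · rw [← intervalIntegral.integral_of_le ha₁₂, intervalIntegral.integral_const_mul,
        integral_one_div (fun h => (hnz 0 h) rfl),
        Real.log_div (ne_of_gt ha₂) (ne_of_gt ha₁)]
    · exact (intervalIntegrable_iff_integrableOn_Ioc_of_le ha₁₂).1
        ((intervalIntegrable_one_div hnz continuousOn_id).const_mul (c * α))
    · filter_upwards [ae_restrict_mem measurableSet_Ioc] with t ht
      have ht0 : (0:ℝ) < t := lt_trans ha₁ ht.1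
      positivity
  -- lintegral of α * t^(α-1)
  have lint_rpow : ∀ a₁ a₂ : ℝ, 0 ≤ a₁ → a₁ ≤ a₂ →
      ∫⁻ t in Ioc a₁ a₂, ENNReal.ofReal (α * t ^ (α - 1)) ∂volume
        = ENNReal.ofReal (a₂ ^ α - a₁ ^ α) := by
    intro a₁ a₂ ha₁ ha₁₂
    rw [← ofReal_integral_eq_lintegral_ofReal]
    · rw [← intervalIntegral.integral_of_le ha₁₂, intervalIntegral.integral_const_mul,
        integral_rpow (Or.inl (by linarith : (-1:ℝ) < α - 1))]
      have h1 : α - 1 + 1 = α := by ring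
      rw [h1]
      congr 1
      field_simp
    · exact (intervalIntegrable_iff_integrableOn_Ioc_of_le ha₁₂).1
        ((intervalIntegrable_rpow' (by linarith)).const_mul α)
    · filter_upwards [ae_restrict_mem measurableSet_Ioc] with t ht
      have ht0 : (0:ℝ) < t := lt_of_le_of_lt ha₁ ht.1
      positivity
  -- the measurable integrand of the layer-cake integral
  have meas_integrand : ∀ n : ℕ, Measurable fun t : ℝ =>
      μ (Ioi (max (b n) t)) * ENNReal.ofReal (α * t ^ (α - 1)) := by
    intro n
    apply Measurable.mul
    · apply Antitone.measurable
      intro s t hst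
      exact measure_mono (Ioi_subset_Ioi (max_le_max le_rfl hst))
    · fun_prop
  -- per-n estimate
  have est : ∀ n : ℕ, 0 < b n → b n < δ₀ →
      ((θ-ε) * α * (Real.log δ₀ - Real.log (b n))
          ≤ (∫⁻ x in Ioi (b n), ENNReal.ofReal (x ^ α) ∂μ).toReal
        ∧ (∫⁻ x in Ioi (b n), ENNReal.ofReal (x ^ α) ∂μ).toReal
          ≤ (θ+ε) + (θ+ε) * α * (Real.log δ₀ - Real.log (b n)) + D.toReal) := by
    intro n hbn hbδ
    have hlogd : 0 ≤ Real.log δ₀ - Real.log (b n) := by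
      have := Real.log_le_log hbn hbδ.le
      linarith
    have hTb : μ (Ioi (b n)) = ENNReal.ofReal ((μ (Ioi (b n))).toReal) :=
      (ENNReal.ofReal_toReal (hfin _ hbn)).symm
    -- split the layer cake integral
    have hsplit : Ioi (0:ℝ) = (Ioc 0 (b n) ∪ Ioc (b n) δ₀) ∪ Ioi δ₀ := by
      rw [Ioc_union_Ioc_eq_Ioc hbn.le hbδ.le, Ioc_union_Ioi_eq_Ioi hδ₀pos.le]
    set f : ℝ → ENNReal := fun t => μ (Ioi (max (b n) t)) * ENNReal.ofReal (α * t ^ (α - 1))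
      with hfdef
    have hQsplit : ∫⁻ x in Ioi (b n), ENNReal.ofReal (x ^ α) ∂μ
        = (∫⁻ t in Ioc 0 (b n), f t ∂volume) + (∫⁻ t in Ioc (b n) δ₀, f t ∂volume)
          + (∫⁻ t in Ioi δ₀, f t ∂volume) := by
      rw [layer n hbn, hsplit,
        lintegral_union measurableSet_Ioi (by
          rw [Ioc_union_Ioc_eq_Ioc hbn.le hbδ.le]
          exact Ioc_disjoint_Ioi le_rfl),
        lintegral_union measurableSet_Ioc (Ioc_disjoint_Ioc_of_le le_rfl)]
    -- Q1
    have hQ1 : ∫⁻ t in Ioc 0 (b n), f t ∂volume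
        = μ (Ioi (b n)) * ENNReal.ofReal ((b n) ^ α) := by
      have : ∫⁻ t in Ioc 0 (b n), f t ∂volume
          = ∫⁻ t in Ioc 0 (b n), μ (Ioi (b n)) * ENNReal.ofReal (α * t ^ (α - 1)) ∂volume := by
        refine setLIntegral_congr_fun measurableSet_Ioc (fun t ht => ?_)
        rw [hfdef]
        simp only [max_eq_left ht.2]
      rw [this, lintegral_const_mul' _ _ (hfin _ hbn), lint_rpow 0 (b n) le_rfl hbn.le,
        Real.zero_rpow (ne_of_gt hα0), sub_zero]
    have hQ1le : ∫⁻ t in Ioc 0 (b n), f t ∂volume ≤ ENNReal.ofReal (θ + ε) := by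
      rw [hQ1, hTb, ← ENNReal.ofReal_mul ENNReal.toReal_nonneg]
      apply ENNReal.ofReal_le_ofReal
      have h3 := hδ₀ (b n) hbn (le_of_lt hbδ)
      rw [abs_le] at h3
      nlinarith [h3.1, h3.2]
    -- Q2 bounds
    have hQ2le : ∫⁻ t in Ioc (b n) δ₀, f t ∂volume
        ≤ ENNReal.ofReal ((θ+ε) * α * (Real.log δ₀ - Real.log (b n))) := by
      rw [← lint_one_div (θ+ε) (b n) δ₀ (by linarith) hbn hbδ.le]
      refine setLIntegral_mono (by fun_prop) fun t ht => ?_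
      have ht0 : 0 < t := lt_trans hbn ht.1
      rw [hfdef]
      simp only [max_eq_right ht.1.le]
      have hTt : μ (Ioi t) = ENNReal.ofReal ((μ (Ioi t)).toReal) :=
        (ENNReal.ofReal_toReal (hfin _ ht0)).symm
      rw [hTt, ← ENNReal.ofReal_mul ENNReal.toReal_nonneg]
      apply ENNReal.ofReal_le_ofReal
      have h3 := hδ₀ t ht0 ht.2
      rw [abs_le] at h3
      have hta : 0 < t ^ α := Real.rpow_pos_of_pos ht0 α
      have hT' : (μ (Ioi t)).toReal ≤ (θ+ε) * (t ^ α)⁻¹ := by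
        rw [le_mul_inv_iff₀ hta]  -- maybe wrong name
        nlinarith [h3.2]
      have hpow : (t ^ α)⁻¹ * (α * t ^ (α-1)) = α * (1/t) := by
        rw [← Real.rpow_neg ht0.le]
        rw [show (α : ℝ) * t ^ (α-1) = t ^ (α-1) * α by ring, ← mul_assoc,
          ← Real.rpow_add ht0]
        rw [show -α + (α - 1) = (-1 : ℝ) by ring, Real.rpow_neg_one]
        ring
      calc (μ (Ioi t)).toReal * (α * t ^ (α-1))
          ≤ ((θ+ε) * (t ^ α)⁻¹) * (α * t ^ (α-1)) := by
            apply mul_le_mul_of_nonneg_right hT' (by positivity)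
        _ = (θ+ε) * α * (1/t) := by rw [mul_assoc, hpow]; ring
    have hQ2ge : ENNReal.ofReal ((θ-ε) * α * (Real.log δ₀ - Real.log (b n)))
        ≤ ∫⁻ t in Ioc (b n) δ₀, f t ∂volume := by
      rcases le_or_gt (θ - ε) 0 with hc | hc
      · calc ENNReal.ofReal ((θ-ε) * α * (Real.log δ₀ - Real.log (b n)))
            ≤ ENNReal.ofReal 0 := ENNReal.ofReal_le_ofReal
              (mul_nonpos_of_nonpos_of_nonneg
                (mul_nonpos_of_nonpos_of_nonneg hc hα0.le) hlogd)
          _ = 0 := ENNReal.ofReal_zero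
          _ ≤ _ := zero_le
      · rw [← lint_one_div (θ-ε) (b n) δ₀ hc.le hbn hbδ.le]
        refine setLIntegral_mono (meas_integrand n) fun t ht => ?_
        have ht0 : 0 < t := lt_trans hbn ht.1
        rw [hfdef]
        simp only [max_eq_right ht.1.le]
        have hTt : μ (Ioi t) = ENNReal.ofReal ((μ (Ioi t)).toReal) :=
          (ENNReal.ofReal_toReal (hfin _ ht0)).symm
        rw [hTt, ← ENNReal.ofReal_mul ENNReal.toReal_nonneg]
        apply ENNReal.ofReal_le_ofReal
        have h3 := hδ₀ t ht0 ht.2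
        rw [abs_le] at h3
        have hta : 0 < t ^ α := Real.rpow_pos_of_pos ht0 α
        have hT' : (θ-ε) * (t ^ α)⁻¹ ≤ (μ (Ioi t)).toReal := by
          rw [mul_inv_le_iff₀ hta]  -- maybe wrong name
          nlinarith [h3.1]
        have hpow : (t ^ α)⁻¹ * (α * t ^ (α-1)) = α * (1/t) := by
          rw [← Real.rpow_neg ht0.le]
          rw [show (α : ℝ) * t ^ (α-1) = t ^ (α-1) * α by ring, ← mul_assoc,
            ← Real.rpow_add ht0]
          rw [show -α + (α - 1) = (-1 : ℝ) by ring, Real.rpow_neg_one]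
          ring
        calc (θ-ε) * α * (1/t) = ((θ-ε) * (t ^ α)⁻¹) * (α * t ^ (α-1)) := by
              rw [mul_assoc (θ-ε), ← hpow]; ring
          _ ≤ (μ (Ioi t)).toReal * (α * t ^ (α-1)) := by
              apply mul_le_mul_of_nonneg_right hT' (by positivity)
    -- Q3
    have hQ3le : ∫⁻ t in Ioi δ₀, f t ∂volume ≤ D := by
      have hδp : δ₀ ≤ p := le_trans hδ₀1 hp
      rw [← Ioc_union_Ioi_eq_Ioi hδp,
        lintegral_union measurableSet_Ioi (Ioc_disjoint_Ioi le_rfl)]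
      have hpart2 : ∫⁻ t in Ioi p, f t ∂volume = 0 := by
        have : ∫⁻ t in Ioi p, f t ∂volume = ∫⁻ t in Ioi p, 0 ∂volume := by
          refine setLIntegral_congr_fun measurableSet_Ioi (fun t ht => ?_)
          rw [hfdef]
          have : μ (Ioi (max (b n) t)) = 0 :=
            measure_mono_null (Ioi_subset_Ioi (le_trans (le_of_lt ht) (le_max_right _ _))) hsupp
          simp [this]
        rw [this, lintegral_zero]
      rw [hpart2, add_zero]
      calc ∫⁻ t in Ioc δ₀ p, f t ∂volume
          ≤ ∫⁻ t in Ioc δ₀ p, μ (Ioi δ₀) * ENNReal.ofReal (α * t ^ (α - 1)) ∂volume := by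
            refine setLIntegral_mono (by fun_prop) fun t ht => ?_
            rw [hfdef]
            exact mul_le_mul_left
              (measure_mono (Ioi_subset_Ioi (le_trans ht.1.le (le_max_right _ _)))) _
        _ = μ (Ioi δ₀) * ENNReal.ofReal (p ^ α - δ₀ ^ α) := by
            rw [lintegral_const_mul' _ _ (hfin _ hδ₀pos), lint_rpow δ₀ p hδ₀pos.le hδp]
        _ ≤ D := by
            rw [hDdef]
            refine mul_le_mul_right (ENNReal.ofReal_le_ofReal ?_) _
            have : 0 ≤ δ₀ ^ α := Real.rpow_nonneg hδ₀pos.le α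
            linarith
    -- combine in ENNReal
    have hQup : ∫⁻ x in Ioi (b n), ENNReal.ofReal (x ^ α) ∂μ
        ≤ ENNReal.ofReal (θ + ε) + ENNReal.ofReal ((θ+ε) * α * (Real.log δ₀ - Real.log (b n))) + D := by
      rw [hQsplit]
      exact add_le_add (add_le_add hQ1le hQ2le) hQ3le
    have hQtop : ∫⁻ x in Ioi (b n), ENNReal.ofReal (x ^ α) ∂μ ≠ ⊤ :=
      ne_top_of_le_ne_top (by
        exact ENNReal.add_ne_top.mpr ⟨ENNReal.add_ne_top.mpr
          ⟨ENNReal.ofReal_ne_top, ENNReal.ofReal_ne_top⟩, hDtop⟩) hQup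
    have hQlo : ENNReal.ofReal ((θ-ε) * α * (Real.log δ₀ - Real.log (b n)))
        ≤ ∫⁻ x in Ioi (b n), ENNReal.ofReal (x ^ α) ∂μ := by
      rw [hQsplit]
      exact le_trans hQ2ge (le_trans le_add_self (le_add_of_nonneg_right zero_le))
    constructor
    · exact (ENNReal.ofReal_le_iff_le_toReal hQtop).1 hQlo
    · have h4 := ENNReal.toReal_mono (by
        exact ENNReal.add_ne_top.mpr ⟨ENNReal.add_ne_top.mpr
          ⟨ENNReal.ofReal_ne_top, ENNReal.ofReal_ne_top⟩, hDtop⟩) hQup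
      rwa [ENNReal.toReal_add (ENNReal.add_ne_top.mpr
          ⟨ENNReal.ofReal_ne_top, ENNReal.ofReal_ne_top⟩) hDtop,
        ENNReal.toReal_add ENNReal.ofReal_ne_top ENNReal.ofReal_ne_top,
        ENNReal.toReal_ofReal (by linarith),
        ENNReal.toReal_ofReal (by positivity)] at h4
  -- the comparison sequences
  set U : ℕ → ℝ := fun n => ((θ+ε) + D.toReal + (θ+ε)*α*Real.log δ₀) / Real.log (n:ℕ)
      - (θ+ε)*α*(Real.log (b n)/Real.log (n:ℕ)) with hUdef
  set V : ℕ → ℝ := fun n => ((θ-ε)*α*Real.log δ₀) / Real.log (n:ℕ)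
      - (θ-ε)*α*(Real.log (b n)/Real.log (n:ℕ)) with hVdef
  have hU : Tendsto U atTop (𝓝 (0 - (θ+ε)*α*(-(1/(2*α))))) := by
    exact Tendsto.sub (Tendsto.div_atTop tendsto_const_nhds hlogtop)
      (tendsto_const_nhds.mul hblog)
  have hV : Tendsto V atTop (𝓝 (0 - (θ-ε)*α*(-(1/(2*α))))) := by
    exact Tendsto.sub (Tendsto.div_atTop tendsto_const_nhds hlogtop)
      (tendsto_const_nhds.mul hblog)
  have hUlim : (0 : ℝ) - (θ+ε)*α*(-(1/(2*α))) = (θ+ε)/2 := by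
    field_simp
    ring
  have hVlim : (0 : ℝ) - (θ-ε)*α*(-(1/(2*α))) = (θ-ε)/2 := by
    field_simp
    ring
  rw [hUlim] at hU
  rw [hVlim] at hV
  have hUev : ∀ᶠ n in atTop, U n < θ/2 + ε :=
    hU.eventually_lt_const (by linarith)
  have hVev : ∀ᶠ n in atTop, θ/2 - ε < V n :=
    hV.eventually_const_lt (by linarith)
  have hbev : ∀ᶠ n in atTop, b n < δ₀ := hb0.eventually (eventually_lt_nhds hδ₀pos)
  filter_upwards [hbpos, hbev, hUev, hVev, hlogtop.eventually_ge_atTop 1]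
    with n h1 h2 h4 h5 h6
  obtain ⟨hlo, hup⟩ := est n h1 h2
  have hlogpos : 0 < Real.log (n:ℝ) := lt_of_lt_of_le one_pos h6
  constructor
  · have hVeq : V n = ((θ-ε) * α * (Real.log δ₀ - Real.log (b n))) / Real.log (n:ℝ) := by
      rw [hVdef]; ring
    calc θ/2 - ε ≤ V n := h5.le
      _ ≤ _ := by
        rw [hVeq]
        exact (div_le_div_iff_of_pos_right hlogpos).2 hlo
  · have hUeq : U n = ((θ+ε) + (θ+ε) * α * (Real.log δ₀ - Real.log (b n)) + D.toReal)
        / Real.log (n:ℝ) := by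
      rw [hUdef]; ring
    calc (∫⁻ x in Ioi (b n), ENNReal.ofReal (x ^ α) ∂μ).toReal / Real.log (n:ℝ)
        ≤ U n := by
          rw [hUeq]
          exact (div_le_div_iff_of_pos_right hlogpos).2 hup
      _ ≤ θ/2 + ε := h4.le

lemma measT (μ : Measure ℝ) : Measurable (fun s : ℝ => μ (Ioi s)) :=
  Antitone.measurable (fun _ _ hst => measure_mono (Ioi_subset_Ioi hst))

lemma measTail (μ : Measure ℝ) {w v : ℝ} :
    Measurable fun x : ℝ => (μ (Ioi (w / (v * x)))).toReal :=
  ENNReal.measurable_toReal.comp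
    ((measT μ).comp (measurable_const.div (measurable_const.mul measurable_id)))

lemma intOn (μ : Measure ℝ) {p w : ℝ} (hp : 1 ≤ p) (hw : 0 < w)
    (hlevy : ∫⁻ x, ENNReal.ofReal (min (x ^ 2) 1) ∂μ < ⊤)
    (hsupp : μ (Ioi p) = 0) (hfin : ∀ s : ℝ, 0 < s → μ (Ioi s) ≠ ⊤)
    {β v : ℝ} (hβ : 0 < β) (hv : 0 < v) :
    IntegrableOn (fun x : ℝ => (μ (Ioi (w / (v * x)))).toReal) (Ioi β) μ := by
  have hvp : 0 < w / (v * p) := by positivity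
  haveI : IsFiniteMeasure (μ.restrict (Ioi β)) :=
    ⟨by rw [Measure.restrict_apply_univ]; exact lt_top_iff_ne_top.2 (hfin β hβ)⟩
  have ae_le_p : ∀ᵐ x ∂μ, x ≤ p := by
    have h1 : ∀ᵐ x ∂μ, x ∉ Ioi p := (ae_iff.2 (by simp only [not_not]; exact hsupp))
    filter_upwards [h1] with x hx
    simpa [not_lt] using hx
  refine Integrable.mono' (integrable_const ((μ (Ioi (w / (v * p)))).toReal))
    (measTail μ).aestronglyMeasurable ?_
  filter_upwards [ae_restrict_of_ae ae_le_p, ae_restrict_mem measurableSet_Ioi] with x hxp hxβ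
  rw [Real.norm_eq_abs, abs_of_nonneg ENNReal.toReal_nonneg]
  refine ENNReal.toReal_mono (hfin _ hvp) (measure_mono (Ioi_subset_Ioi ?_))
  exact div_le_div_of_nonneg_left hw.le (mul_pos hv (hβ.trans hxβ))
    (mul_le_mul_of_nonneg_left hxp hv.le)

set_option maxHeartbeats 1000000 in
lemma core (μ : Measure ℝ) {p α θ w : ℝ} (hα1 : 1 < α) (hp : 1 ≤ p) (hw : 0 < w)
    (hlevy : ∫⁻ x, ENNReal.ofReal (min (x ^ 2) 1) ∂μ < ⊤)
    (hsupp : μ (Ioi p) = 0) (hfin : ∀ s : ℝ, 0 < s → μ (Ioi s) ≠ ⊤)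
    (hθ : Tendsto (fun s : ℝ => s ^ α * (μ (Ioi s)).toReal) (𝓝[>] 0) (𝓝 θ))
    {b u : ℕ → ℝ} (hbpos : ∀ᶠ n in atTop, 0 < b n) (hb0 : Tendsto b atTop (𝓝 0))
    (hblog : Tendsto (fun n : ℕ => Real.log (b n) / Real.log (n : ℝ)) atTop (𝓝 (-(1/(2*α)))))
    (hlogtop : Tendsto (fun n : ℕ => Real.log (n : ℝ)) atTop atTop)
    (hupos : ∀ᶠ n in atTop, 0 < u n)
    (hua : ∀ᶠ n in atTop, (u n) ^ α = (n : ℝ) / Real.log (n : ℝ))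
    (hub2 : Tendsto (fun n : ℕ => u n * b n ^ 2) atTop atTop)
    (hb2a : Tendsto (fun n : ℕ => (1/(n:ℝ)) * (b n) ^ (-(2*α))) atTop (𝓝 0)) :
    Tendsto (fun n : ℕ => (1/(n:ℝ)) *
        ∫ x in Ioi (b n), ((μ (Ioi (w / (u n * x)))).toReal - (μ (Ioi (b n))).toReal) ∂μ)
      atTop (𝓝 (θ^2/(2*w^α))) := by
  have hα0 : 0 < α := lt_trans one_pos hα1
  have hθnn : 0 ≤ θ := by
    refine ge_of_tendsto hθ ?_
    filter_upwards [self_mem_nhdsWithin] with s hs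
    have : (0:ℝ) < s := hs
    positivity
  have hδget : ∀ ε : ℝ, 0 < ε → ∃ δ₀ : ℝ, 0 < δ₀ ∧
      ∀ s : ℝ, 0 < s → s ≤ δ₀ → |s ^ α * (μ (Ioi s)).toReal - θ| ≤ ε := by
    intro ε hε
    obtain ⟨δ, hδpos, hδ⟩ := Metric.tendsto_nhdsWithin_nhds.mp hθ ε hε
    refine ⟨δ/2, by linarith, fun s hs hsle => ?_⟩
    have h2 := hδ (mem_Ioi.2 hs) (by rw [Real.dist_eq, sub_zero, abs_of_pos hs]; linarith)
    rw [Real.dist_eq] at h2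
    exact h2.le
  -- δ_n → 0
  have hδ0 : Tendsto (fun n : ℕ => w / (u n * b n)) atTop (𝓝 0) := by
    have h1 : (fun n : ℕ => w * (u n * b n ^ 2)⁻¹ * b n) =ᶠ[atTop]
        (fun n : ℕ => w / (u n * b n)) := by
      filter_upwards [hbpos, hupos] with n hb hu
      field_simp
    have h2 : Tendsto (fun n : ℕ => w * (u n * b n ^ 2)⁻¹ * b n) atTop (𝓝 (w * 0 * 0)) :=
      (tendsto_const_nhds.mul hub2.inv_tendsto_atTop).mul hb0
    rw [show w * 0 * 0 = (0:ℝ) by ring] at h2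
    exact h2.congr' h1
  -- finiteness of the Karamata lintegral
  have hQfin : ∀ n : ℕ, 0 < b n → (∫⁻ x in Ioi (b n), ENNReal.ofReal (x ^ α) ∂μ) ≠ ⊤ := by
    intro n hbn
    have ae_le_p : ∀ᵐ x ∂μ, x ≤ p := by
      have h1 : ∀ᵐ x ∂μ, x ∉ Ioi p := (ae_iff.2 (by simp only [not_not]; exact hsupp))
      filter_upwards [h1] with x hx
      simpa [not_lt] using hx
    have hb : ∫⁻ x in Ioi (b n), ENNReal.ofReal (x ^ α) ∂μ
        ≤ ENNReal.ofReal (p ^ α) * μ (Ioi (b n)) := by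
      rw [← setLIntegral_const]
      refine lintegral_mono_ae ?_
      filter_upwards [ae_restrict_of_ae ae_le_p, ae_restrict_mem measurableSet_Ioi]
        with x h1 h2
      exact ENNReal.ofReal_le_ofReal (Real.rpow_le_rpow (le_of_lt (hbn.trans h2)) h1 hα0.le)
    exact ne_top_of_le_ne_top (ENNReal.mul_ne_top ENNReal.ofReal_ne_top (hfin _ hbn)) hb
  set Main : ℕ → ℝ := fun n => (1/(n:ℝ)) *
      ∫ x in Ioi (b n), (μ (Ioi (w / (u n * x)))).toReal ∂μ with hMaindef
  set Err : ℕ → ℝ := fun n =>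
      (1/(n:ℝ)) * ((μ (Ioi (b n))).toReal * (μ (Ioi (b n))).toReal) with hErrdef
  -- split
  have hbit : ∀ᶠ n : ℕ in atTop, (1/(n:ℝ)) *
      ∫ x in Ioi (b n), ((μ (Ioi (w / (u n * x)))).toReal - (μ (Ioi (b n))).toReal) ∂μ
        = Main n - Err n := by
    filter_upwards [hbpos, hupos] with n hb hu
    haveI : IsFiniteMeasure (μ.restrict (Ioi (b n))) :=
      ⟨by rw [Measure.restrict_apply_univ]; exact lt_top_iff_ne_top.2 (hfin _ hb)⟩
    rw [integral_sub (intOn μ hp hw hlevy hsupp hfin hb hu)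
      (integrable_const ((μ (Ioi (b n))).toReal)),
      setIntegral_const, smul_eq_mul]
    simp only [hMaindef, hErrdef, Measure.real]
    ring
  -- error term
  have hErr0 : Tendsto Err atTop (𝓝 0) := by
    obtain ⟨δ₁, hδ₁pos, hδ₁⟩ := hδget 1 one_pos
    apply squeeze_zero' (g := fun n : ℕ => (θ+1)^2 * ((1/(n:ℝ)) * (b n) ^ (-(2*α))))
    · filter_upwards [eventually_ge_atTop 1] with n _
      have : (0:ℝ) ≤ 1/(n:ℝ) := by positivity
      positivity
    · filter_upwards [hbpos, hb0.eventually (eventually_lt_nhds hδ₁pos)] with n hb hbδ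
      have h3 := hδ₁ (b n) hb hbδ.le
      rw [abs_le] at h3
      have hba : 0 < (b n) ^ α := Real.rpow_pos_of_pos hb α
      have hT : (μ (Ioi (b n))).toReal ≤ (θ+1) * ((b n) ^ α)⁻¹ := by
        rw [le_mul_inv_iff₀ hba]
        nlinarith [h3.2]
      have hpow : ((b n) ^ α)⁻¹ * ((b n) ^ α)⁻¹ = (b n) ^ (-(2*α)) := by
        rw [← Real.rpow_neg hb.le, ← Real.rpow_add hb]
        congr 1
        ring
      have h4 : (μ (Ioi (b n))).toReal * (μ (Ioi (b n))).toReal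
          ≤ (θ+1)^2 * ((b n) ^ (-(2*α))) := by
        have := mul_le_mul hT hT ENNReal.toReal_nonneg (by positivity)
        calc (μ (Ioi (b n))).toReal * (μ (Ioi (b n))).toReal
            ≤ ((θ+1) * ((b n) ^ α)⁻¹) * ((θ+1) * ((b n) ^ α)⁻¹) := this
          _ = (θ+1)^2 * (((b n) ^ α)⁻¹ * ((b n) ^ α)⁻¹) := by ring
          _ = (θ+1)^2 * ((b n) ^ (-(2*α))) := by rw [hpow]
      calc Err n ≤ (1/(n:ℝ)) * ((θ+1)^2 * ((b n) ^ (-(2*α)))) := by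
            refine mul_le_mul_of_nonneg_left h4 (by positivity)
        _ = (θ+1)^2 * ((1/(n:ℝ)) * (b n) ^ (-(2*α))) := by ring
    · have h := Tendsto.const_mul ((θ+1)^2 : ℝ) hb2a
      simpa using h
  -- main term
  have hkar := karamata μ hα1 hp hsupp hfin hθ hbpos hb0 hblog hlogtop
  set K : ℕ → ℝ := fun n =>
      (∫⁻ x in Ioi (b n), ENNReal.ofReal (x ^ α) ∂μ).toReal / Real.log (n:ℝ) / w ^ α
    with hKdef
  set R : ℝ := θ / 2 / w ^ α with hRdef
  have hwα : 0 < w ^ α := Real.rpow_pos_of_pos hw α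
  have hRnn : 0 ≤ R := div_nonneg (div_nonneg hθnn (by norm_num)) hwα.le
  have hKlim : Tendsto K atTop (𝓝 R) := hkar.div_const _
  have hMainLim : Tendsto Main atTop (𝓝 (θ^2/(2*w^α))) := by
    apply squeezeEps
    intro ε' hε'
    set ε₀ : ℝ := min 1 (ε' / (2*(R+1))) with hε₀def
    have hε₀pos : 0 < ε₀ := lt_min one_pos (by positivity)
    obtain ⟨δ₀, hδ₀pos, hδ₀⟩ := hδget ε₀ hε₀pos
    have hLR : θ^2/(2*w^α) = θ * R := by
      rw [hRdef]
      field_simp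
    rw [hLR]
    have hKerr : ∀ᶠ n in atTop, |K n - R| ≤ ε' / (2*(θ+1)) := by
      have h5 := Metric.tendsto_nhds.mp hKlim (ε' / (2*(θ+1))) (by positivity)
      filter_upwards [h5] with n h6
      rw [Real.dist_eq] at h6
      exact h6.le
    filter_upwards [hbpos, hupos, hua, hδ0.eventually (eventually_lt_nhds hδ₀pos),
      hlogtop.eventually_ge_atTop 1, hKerr, hKlim.eventually_lt_const (lt_add_one R),
      eventually_gt_atTop 0] with n hb hu huα hδn hln hK1 hK2 hn
    have hnR : (0:ℝ) < (n:ℝ) := by exact_mod_cast hn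
    have hlogpos : 0 < Real.log (n:ℝ) := lt_of_lt_of_le one_pos hln
    have hKnn : 0 ≤ K n :=
      div_nonneg (div_nonneg ENNReal.toReal_nonneg hlogpos.le) hwα.le
    set Q : ENNReal := ∫⁻ x in Ioi (b n), ENNReal.ofReal (x ^ α) ∂μ with hQdef
    set Λ : ENNReal := ∫⁻ x in Ioi (b n), μ (Ioi (w / (u n * x))) ∂μ with hΛdef
    have hQtop : Q ≠ ⊤ := hQfin n hb
    -- pointwise bounds
    have hpoint : ∀ x : ℝ, x ∈ Ioi (b n) →
        (ENNReal.ofReal (θ-ε₀) * (ENNReal.ofReal ((u n / w)^α) * ENNReal.ofReal (x ^ α))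
            ≤ μ (Ioi (w / (u n * x)))
          ∧ μ (Ioi (w / (u n * x)))
            ≤ ENNReal.ofReal (θ+ε₀) * (ENNReal.ofReal ((u n / w)^α) * ENNReal.ofReal (x ^ α))) := by
      intro x hx
      have hx0 : 0 < x := hb.trans hx
      have hs0 : 0 < w / (u n * x) := by positivity
      have hsδ : w / (u n * x) ≤ δ₀ := by
        refine le_trans ?_ hδn.le
        exact div_le_div_of_nonneg_left hw.le (by positivity)
          (mul_le_mul_of_nonneg_left (le_of_lt hx) hu.le)
      set s : ℝ := w / (u n * x) with hsdef
      have h3 := hδ₀ s hs0 hsδ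
      rw [abs_le] at h3
      have hsa : 0 < s ^ α := Real.rpow_pos_of_pos hs0 α
      have hid : (s ^ α)⁻¹ = (u n / w)^α * x ^ α := by
        rw [← Real.inv_rpow hs0.le, hsdef, inv_div,
          show u n * x / w = (u n / w) * x by ring,
          Real.mul_rpow (by positivity) hx0.le]
      have hμs : μ (Ioi s) = ENNReal.ofReal ((μ (Ioi s)).toReal) :=
        (ENNReal.ofReal_toReal (hfin _ hs0)).symm
      have hnn1 : 0 ≤ (u n / w)^α * x ^ α :=
        mul_nonneg (Real.rpow_nonneg (by positivity) _) (Real.rpow_nonneg hx0.le _)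
      have hsplit2 : ∀ c : ℝ, ENNReal.ofReal (c * ((u n / w)^α * x ^ α))
          = ENNReal.ofReal c * (ENNReal.ofReal ((u n / w)^α) * ENNReal.ofReal (x ^ α)) := by
        intro c
        rw [ENNReal.ofReal_mul' hnn1,
          ENNReal.ofReal_mul (Real.rpow_nonneg (by positivity) _)]
      constructor
      · rw [← hsplit2, hμs]
        apply ENNReal.ofReal_le_ofReal
        rw [← hid, ← div_eq_mul_inv, div_le_iff₀ hsa]
        nlinarith [h3.1]
      · rw [← hsplit2, hμs]
        apply ENNReal.ofReal_le_ofReal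
        rw [← hid, ← div_eq_mul_inv, le_div_iff₀ hsa]
        nlinarith [h3.2, ENNReal.toReal_nonneg (a := μ (Ioi s))]
    have hΛup : Λ ≤ ENNReal.ofReal (θ+ε₀) * (ENNReal.ofReal ((u n / w)^α) * Q) := by
      rw [hΛdef, hQdef, ← lintegral_const_mul' _ _ ENNReal.ofReal_ne_top,
        ← lintegral_const_mul' _ _ ENNReal.ofReal_ne_top]
      exact setLIntegral_mono (by fun_prop) (fun x hx => (hpoint x hx).2)
    have hΛlo : ENNReal.ofReal (θ-ε₀) * (ENNReal.ofReal ((u n / w)^α) * Q) ≤ Λ := by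
      rw [hΛdef, hQdef, ← lintegral_const_mul' _ _ ENNReal.ofReal_ne_top,
        ← lintegral_const_mul' _ _ ENNReal.ofReal_ne_top]
      refine setLIntegral_mono ((measT μ).comp
        (measurable_const.div (measurable_const.mul measurable_id)))
        (fun x hx => (hpoint x hx).1)
    have hΛtop : Λ ≠ ⊤ := ne_top_of_le_ne_top
      (ENNReal.mul_ne_top ENNReal.ofReal_ne_top
        (ENNReal.mul_ne_top ENNReal.ofReal_ne_top hQtop)) hΛup
    -- to real
    have hMn : Main n = (1/(n:ℝ)) * Λ.toReal := by
      simp only [hMaindef]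
      congr 1
      rw [integral_eq_lintegral_of_nonneg_ae (ae_of_all _ fun x => ENNReal.toReal_nonneg)
        (measTail μ).aestronglyMeasurable]
      rw [hΛdef]
      congr 1
      refine setLIntegral_congr_fun measurableSet_Ioi (fun x hx => ?_)
      have hx0 : 0 < x := hb.trans hx
      exact ENNReal.ofReal_toReal (hfin _ (by positivity))
    have hup' : Λ.toReal ≤ (θ+ε₀) * ((u n / w)^α * Q.toReal) := by
      have h7 := ENNReal.toReal_mono (ENNReal.mul_ne_top ENNReal.ofReal_ne_top
        (ENNReal.mul_ne_top ENNReal.ofReal_ne_top hQtop)) hΛup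
      rwa [ENNReal.toReal_mul, ENNReal.toReal_mul, ENNReal.toReal_ofReal (by positivity),
        ENNReal.toReal_ofReal (by positivity)] at h7
    have hlo' : (θ-ε₀) * ((u n / w)^α * Q.toReal) ≤ Λ.toReal := by
      rcases le_or_gt (θ-ε₀) 0 with hneg | hpos
      · refine le_trans (mul_nonpos_of_nonpos_of_nonneg hneg (by positivity)) ?_
        exact ENNReal.toReal_nonneg
      · have h7 := ENNReal.toReal_mono hΛtop hΛlo
        rwa [ENNReal.toReal_mul, ENNReal.toReal_mul, ENNReal.toReal_ofReal hpos.le,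
          ENNReal.toReal_ofReal (by positivity)] at h7
    -- identify with K n
    have hn0 : (n:ℝ) ≠ 0 := ne_of_gt hnR
    have hlog0 : Real.log (n:ℝ) ≠ 0 := ne_of_gt hlogpos
    have hKid : (1/(n:ℝ)) * ((u n / w)^α * Q.toReal) = K n := by
      rw [hKdef, Real.div_rpow hu.le hw.le, huα]
      simp only [← hQdef]
      field_simp
    have hsw1 : (θ-ε₀) * K n ≤ Main n := by
      rw [hMn, ← hKid]
      calc (θ-ε₀) * ((1/(n:ℝ)) * ((u n / w)^α * Q.toReal))
          = (1/(n:ℝ)) * ((θ-ε₀) * ((u n / w)^α * Q.toReal)) := by ring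
        _ ≤ (1/(n:ℝ)) * Λ.toReal := by
            exact mul_le_mul_of_nonneg_left hlo' (by positivity)
    have hsw2 : Main n ≤ (θ+ε₀) * K n := by
      rw [hMn, ← hKid]
      calc (1/(n:ℝ)) * Λ.toReal
          ≤ (1/(n:ℝ)) * ((θ+ε₀) * ((u n / w)^α * Q.toReal)) := by
            exact mul_le_mul_of_nonneg_left hup' (by positivity)
        _ = (θ+ε₀) * ((1/(n:ℝ)) * ((u n / w)^α * Q.toReal)) := by ring
    -- finish
    have e1 : (θ-ε₀) * K n = θ * K n - ε₀ * K n := by ring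
    have e2 : (θ+ε₀) * K n = θ * K n + ε₀ * K n := by ring
    have h8 : |Main n - θ * K n| ≤ ε₀ * K n := by
      rw [abs_le]
      exact ⟨by linarith [hsw1, e1], by linarith [hsw2, e2]⟩
    have h9 : |θ * K n - θ * R| ≤ ε' / 2 := by
      have : |θ * K n - θ * R| = θ * |K n - R| := by
        rw [← mul_sub, abs_mul, abs_of_nonneg hθnn]
      rw [this]
      have h10 : θ * |K n - R| ≤ θ * (ε' / (2*(θ+1))) :=
        mul_le_mul_of_nonneg_left hK1 hθnn
      have ha0 : 0 ≤ ε' / (2*(θ+1)) := by positivity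
      have ha : ε' = 2*(θ+1)*(ε' / (2*(θ+1))) := by field_simp
      nlinarith [h10, ha0, ha]
    have h13 : ε₀ * K n ≤ ε' / 2 := by
      calc ε₀ * K n ≤ (ε' / (2*(R+1))) * (R+1) :=
            mul_le_mul (min_le_right _ _) hK2.le hKnn (by positivity)
        _ = ε'/2 := by field_simp
    have h14 : |Main n - θ * R| ≤ ε' := by
      calc |Main n - θ * R| ≤ |Main n - θ * K n| + |θ * K n - θ * R| := abs_sub_le _ _ _
        _ ≤ ε₀ * K n + ε'/2 := add_le_add h8 h9
        _ ≤ ε'/2 + ε'/2 := by linarith [h13]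
        _ = ε' := by ring
    rw [abs_le] at h14
    exact ⟨by linarith [h14.1], by linarith [h14.2]⟩
  have hfinal := hMainLim.sub hErr0
  rw [sub_zero] at hfinal
  exact hfinal.congr' (hbit.mono fun n h => h.symm)


section seqfacts
variable {α : ℝ}

lemma hlogtop' : Tendsto (fun n : ℕ => Real.log (n : ℝ)) atTop atTop :=
  Real.tendsto_log_atTop.comp tendsto_natCast_atTop_atTop

lemma hbpos' (hα0 : 0 < α) : ∀ᶠ n : ℕ in atTop, 0 < Real.log n / (n:ℝ) ^ (1/(2*α)) := by
  filter_upwards [hlogtop'.eventually_gt_atTop 0, eventually_gt_atTop 0] with n h1 h2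
  have h3 : (0:ℝ) < (n:ℝ) := by exact_mod_cast h2
  exact div_pos h1 (Real.rpow_pos_of_pos h3 _)

lemma hupos' (hα0 : 0 < α) : ∀ᶠ n : ℕ in atTop, 0 < ((n:ℝ) / Real.log n) ^ (1/α) := by
  filter_upwards [hlogtop'.eventually_gt_atTop 0, eventually_gt_atTop 0] with n h1 h2
  have h3 : (0:ℝ) < (n:ℝ) := by exact_mod_cast h2
  exact Real.rpow_pos_of_pos (div_pos h3 h1) _

lemma hb0' (hα0 : 0 < α) :
    Tendsto (fun n : ℕ => Real.log n / (n:ℝ) ^ (1/(2*α))) atTop (𝓝 0) := by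
  have h1 : (0:ℝ) < 1/(2*α) := by positivity
  have h2 : Tendsto (fun x : ℝ => Real.log x / x ^ (1/(2*α))) atTop (𝓝 0) :=
    (isLittleO_log_rpow_atTop h1).tendsto_div_nhds_zero
  exact h2.comp tendsto_natCast_atTop_atTop

lemma hblog' (hα0 : 0 < α) :
    Tendsto (fun n : ℕ => Real.log (Real.log n / (n:ℝ) ^ (1/(2*α))) / Real.log (n:ℝ))
      atTop (𝓝 (-(1/(2*α)))) := by
  have h2 : Tendsto (fun n : ℕ => Real.log (Real.log (n:ℝ)) / Real.log (n:ℝ) - 1/(2*α))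
      atTop (𝓝 (0 - 1/(2*α))) := by
    refine Tendsto.sub ?_ tendsto_const_nhds
    exact (Real.isLittleO_log_id_atTop.tendsto_div_nhds_zero).comp hlogtop'
  rw [show (0:ℝ) - 1/(2*α) = -(1/(2*α)) by ring] at h2
  refine h2.congr' ?_
  filter_upwards [hlogtop'.eventually_gt_atTop 0, eventually_gt_atTop 0] with n h1 hn
  have h3 : (0:ℝ) < (n:ℝ) := by exact_mod_cast hn
  rw [Real.log_div (ne_of_gt h1) (ne_of_gt (Real.rpow_pos_of_pos h3 _)),
    Real.log_rpow h3, sub_div, mul_div_assoc, div_self (ne_of_gt h1), mul_one]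

lemma hua' (hα0 : 0 < α) : ∀ᶠ n : ℕ in atTop,
    (((n:ℝ) / Real.log n) ^ (1/α)) ^ α = (n:ℝ) / Real.log (n:ℝ) := by
  filter_upwards [hlogtop'.eventually_gt_atTop 0, eventually_gt_atTop 0] with n h1 hn
  have h3 : (0:ℝ) < (n:ℝ) := by exact_mod_cast hn
  rw [← Real.rpow_mul (le_of_lt (div_pos h3 h1)), one_div,
    inv_mul_cancel₀ (ne_of_gt hα0), Real.rpow_one]

lemma hub2' (hα0 : 0 < α) (hα1 : 1 < α) :
    Tendsto (fun n : ℕ => (((n:ℝ) / Real.log n) ^ (1/α)) *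
      (Real.log n / (n:ℝ) ^ (1/(2*α))) ^ 2) atTop atTop := by
  have hexp : (0:ℝ) < 2 - 1/α := by
    have : 1/α < 1 := by rw [div_lt_one hα0]; exact hα1
    linarith
  have h2 : Tendsto (fun n : ℕ => Real.log (n:ℝ) ^ ((2:ℝ) - 1/α)) atTop atTop :=
    (tendsto_rpow_atTop hexp).comp hlogtop'
  refine h2.congr' ?_
  filter_upwards [hlogtop'.eventually_gt_atTop 0, eventually_gt_atTop 0] with n h1 hn
  have h3 : (0:ℝ) < (n:ℝ) := by exact_mod_cast hn
  have e1 : ((n:ℝ) ^ ((1:ℝ)/(2*α))) ^ (2:ℕ) = (n:ℝ) ^ ((1:ℝ)/α) := by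
    rw [← Real.rpow_natCast ((n:ℝ) ^ ((1:ℝ)/(2*α))) 2, ← Real.rpow_mul h3.le]
    congr 1
    push_cast
    field_simp
  have e2 : ((n:ℝ) / Real.log n) ^ ((1:ℝ)/α)
      = (n:ℝ) ^ ((1:ℝ)/α) / Real.log n ^ ((1:ℝ)/α) := Real.div_rpow h3.le h1.le _
  have e3 : Real.log (n:ℝ) ^ (2:ℕ) = Real.log (n:ℝ) ^ ((2:ℝ)) :=
    (Real.rpow_natCast _ 2).symm
  have hN : (0:ℝ) < (n:ℝ) ^ ((1:ℝ)/α) := Real.rpow_pos_of_pos h3 _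
  have hLr : (0:ℝ) < Real.log (n:ℝ) ^ ((1:ℝ)/α) := Real.rpow_pos_of_pos h1 _
  rw [Real.rpow_sub h1]
  rw [e2, div_pow, e1, e3]
  field_simp

lemma hb2a' (hα0 : 0 < α) :
    Tendsto (fun n : ℕ => (1/(n:ℝ)) * (Real.log n / (n:ℝ) ^ (1/(2*α))) ^ (-(2*α)))
      atTop (𝓝 0) := by
  have h2 : Tendsto (fun n : ℕ => Real.log (n:ℝ) ^ (-(2*α))) atTop (𝓝 0) :=
    (tendsto_rpow_neg_atTop (by positivity)).comp hlogtop'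
  refine h2.congr' ?_
  filter_upwards [hlogtop'.eventually_gt_atTop 0, eventually_gt_atTop 0] with n h1 hn
  have h3 : (0:ℝ) < (n:ℝ) := by exact_mod_cast hn
  have e1 : ((n:ℝ) ^ ((1:ℝ)/(2*α))) ^ (-(2*α)) = (n:ℝ)⁻¹ := by
    rw [← Real.rpow_mul h3.le, show (1:ℝ)/(2*α) * (-(2*α)) = -1 by field_simp,
      Real.rpow_neg_one]
  rw [Real.div_rpow h1.le (Real.rpow_pos_of_pos h3 _).le, e1, div_inv_eq_mul]
  rw [mul_comm ((1:ℝ)/(n:ℝ)) _, mul_one_div, mul_div_assoc, div_self (ne_of_gt h3), mul_one]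

end seqfacts

/-- Under (H2-α) with `α ∈ (1,2)`, with `u_n = (n/log n)^{1/α}` and
`β_n = (log n)/n^{1/(2α)}`, the measures
`K_n(A) = (1/n) ∫_{|x|>β_n} F(dx) ∫_{|y|≤β_n} F(dy) 1_A(u_n x y)` satisfy
`K_n((w,∞)) → (θ₊² + θ₋²)/(2 w^α)` for every `w > 0`. -/
theorem stmt18 (F : Measure ℝ) (p α θp θm : ℝ) (hp : 1 ≤ p)
    (hsupp : F {x : ℝ | p < |x|} = 0)
    (hlevy : ∫⁻ x, ENNReal.ofReal (min (x ^ 2) 1) ∂F < ⊤)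
    (hα1 : 1 < α) (hα2 : α < 2)
    (hθp : Tendsto (fun β : ℝ => β ^ α * (F (Ioi β)).toReal) (𝓝[>] 0) (𝓝 θp))
    (hθm : Tendsto (fun β : ℝ => β ^ α * (F (Iio (-β))).toReal) (𝓝[>] 0) (𝓝 θm))
    (hθ : 0 < θp + θm) (w : ℝ) (hw : 0 < w) :
    Tendsto (fun n : ℕ =>
        (1 / (n : ℝ)) *
          ∫ x in {x : ℝ | Real.log n / (n : ℝ) ^ (1 / (2 * α)) < |x|},
            (F {y : ℝ | |y| ≤ Real.log n / (n : ℝ) ^ (1 / (2 * α)) ∧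
                w < ((n : ℝ) / Real.log n) ^ (1 / α) * x * y}).toReal ∂F)
      atTop (𝓝 ((θp ^ 2 + θm ^ 2) / (2 * w ^ α))) := by
  have hα0 : 0 < α := by linarith
  set b : ℕ → ℝ := fun n => Real.log n / (n:ℝ) ^ (1/(2*α)) with hbdef
  set u : ℕ → ℝ := fun n => ((n:ℝ) / Real.log n) ^ (1/α) with hudef
  -- tails of F
  have hsuppP : F (Ioi p) = 0 := by
    refine measure_mono_null (fun x hx => ?_) hsupp
    exact lt_of_lt_of_le hx (le_abs_self x)
  have hsuppM : F (Iio (-p)) = 0 := by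
    refine measure_mono_null (fun x hx => ?_) hsupp
    have : -x > p := by simpa [lt_neg] using hx
    exact lt_of_lt_of_le this (neg_le_abs x)
  have hfinP : ∀ s : ℝ, 0 < s → F (Ioi s) ≠ ⊤ := fun s hs =>
    ne_top_of_le_ne_top (tail_fin F hlevy hs)
      (measure_mono (fun x hx => lt_of_lt_of_le hx (le_abs_self x)))
  have hfinM : ∀ s : ℝ, 0 < s → F (Iio (-s)) ≠ ⊤ := fun s hs =>
    ne_top_of_le_ne_top (tail_fin F hlevy hs)
      (measure_mono (fun x hx => by
        have : -x > s := by simpa [lt_neg] using hx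
        exact lt_of_lt_of_le this (neg_le_abs x)))
  -- the reflected measure
  have hemb : MeasurableEmbedding (fun x : ℝ => -x) := (Homeomorph.neg ℝ).measurableEmbedding
  set ν : Measure ℝ := Measure.map (fun x : ℝ => -x) F with hνdef
  have hpre : ∀ s : ℝ, (fun x : ℝ => -x) ⁻¹' (Ioi s) = Iio (-s) := by
    intro s
    ext x
    simp [lt_neg]
  have hνIoi : ∀ s : ℝ, ν (Ioi s) = F (Iio (-s)) := by
    intro s
    rw [hνdef, hemb.map_apply, hpre]
  have hsuppν : ν (Ioi p) = 0 := by rw [hνIoi]; exact hsuppM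
  have hfinν : ∀ s : ℝ, 0 < s → ν (Ioi s) ≠ ⊤ := fun s hs => by
    rw [hνIoi]; exact hfinM s hs
  have hθν : Tendsto (fun s : ℝ => s ^ α * (ν (Ioi s)).toReal) (𝓝[>] 0) (𝓝 θm) :=
    hθm.congr (fun s => by rw [hνIoi])
  have hlevyν : ∫⁻ x, ENNReal.ofReal (min (x ^ 2) 1) ∂ν < ⊤ := by
    rw [hνdef, hemb.lintegral_map]
    simpa using hlevy
  -- core applications
  have coreF := core F hα1 hp hw hlevy hsuppP hfinP hθp (b := b) (u := u)
    (hbpos' hα0) (hb0' hα0) (hblog' hα0) hlogtop' (hupos' hα0) (hua' hα0)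
    (hub2' hα0 hα1) (hb2a' hα0)
  have coreν := core ν hα1 hp hw hlevyν hsuppν hfinν hθν (b := b) (u := u)
    (hbpos' hα0) (hb0' hα0) (hblog' hα0) hlogtop' (hupos' hα0) (hua' hα0)
    (hub2' hα0 hα1) (hb2a' hα0)
  -- eventual rewriting of the prelimit expression
  have hδb : ∀ᶠ n : ℕ in atTop, w / (u n * b n) ≤ b n := by
    filter_upwards [hbpos' hα0, hupos' hα0, (hub2' hα0 hα1).eventually_ge_atTop w]
      with n hb hu hub
    rw [div_le_iff₀ (mul_pos hu hb)]
    calc w ≤ u n * b n ^ 2 := hub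
      _ = b n * (u n * b n) := by ring
  have hkey : ∀ᶠ n : ℕ in atTop,
      (1 / (n : ℝ)) *
          ∫ x in {x : ℝ | Real.log n / (n : ℝ) ^ (1 / (2 * α)) < |x|},
            (F {y : ℝ | |y| ≤ Real.log n / (n : ℝ) ^ (1 / (2 * α)) ∧
                w < ((n : ℝ) / Real.log n) ^ (1 / α) * x * y}).toReal ∂F
        = (1/(n:ℝ)) * (∫ x in Ioi (b n),
              ((F (Ioi (w / (u n * x)))).toReal - (F (Ioi (b n))).toReal) ∂F)
          + (1/(n:ℝ)) * (∫ x in Ioi (b n),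
              ((ν (Ioi (w / (u n * x)))).toReal - (ν (Ioi (b n))).toReal) ∂ν) := by
    filter_upwards [hbpos' hα0, hupos' hα0, hδb] with n hb hu hδn
    have hbl : Real.log (n:ℝ) / (n:ℝ) ^ (1/(2*α)) = b n := rfl
    have hul : ((n:ℝ) / Real.log (n:ℝ)) ^ (1/α) = u n := rfl
    rw [hbl, hul]
    have hS : {x : ℝ | b n < |x|} = Iio (-(b n)) ∪ Ioi (b n) := by
      ext x
      simp only [mem_setOf_eq, mem_union, mem_Iio, mem_Ioi, lt_abs, lt_neg]
      exact or_comm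
    have posEq : ∀ x ∈ Ioi (b n), (F {y : ℝ | |y| ≤ b n ∧ w < u n * x * y}).toReal
        = (F (Ioi (w / (u n * x)))).toReal - (F (Ioi (b n))).toReal := by
      intro x hx
      have hx0 : 0 < x := hb.trans hx
      have hux : 0 < u n * x := mul_pos hu hx0
      have hc0 : 0 < w / (u n * x) := div_pos hw hux
      have hcb : w / (u n * x) < b n :=
        lt_of_lt_of_le (div_lt_div_of_pos_left hw (mul_pos hu hb)
          ((mul_lt_mul_iff_right₀ hu).2 hx)) hδn
      have hset : {y : ℝ | |y| ≤ b n ∧ w < u n * x * y} = Ioc (w / (u n * x)) (b n) := by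
        ext y
        simp only [mem_setOf_eq, mem_Ioc, abs_le]
        constructor
        · rintro ⟨⟨h1, h2⟩, h3⟩
          exact ⟨(div_lt_iff₀ hux).2 (by rw [mul_comm]; exact h3), h2⟩
        · rintro ⟨h1, h2⟩
          have h3 : w < u n * x * y := by
            have h4 := (div_lt_iff₀ hux).1 h1
            rw [mul_comm] at h4
            exact h4
          have hy0 : 0 < y := hc0.trans h1
          exact ⟨⟨by linarith, h2⟩, h3⟩
      rw [hset]
      have hm : F (Ioi (w / (u n * x))) = F (Ioc (w / (u n * x)) (b n)) + F (Ioi (b n)) := by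
        rw [← measure_union (Ioc_disjoint_Ioi le_rfl) measurableSet_Ioi,
          Ioc_union_Ioi_eq_Ioi hcb.le]
      have hfin1 : F (Ioc (w / (u n * x)) (b n)) ≠ ⊤ :=
        ne_top_of_le_ne_top (hfinP _ hc0) (measure_mono Ioc_subset_Ioi_self)
      rw [hm, ENNReal.toReal_add hfin1 (hfinP _ hb)]
      ring
    have negEq : ∀ x ∈ Iio (-(b n)), (F {y : ℝ | |y| ≤ b n ∧ w < u n * x * y}).toReal
        = (F (Iio (w / (u n * x)))).toReal - (F (Iio (-(b n)))).toReal := by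
      intro x hx
      have hx' : x < -(b n) := mem_Iio.1 hx
      have hx0 : x < 0 := lt_trans hx' (by linarith)
      have hux : u n * x < 0 := mul_neg_of_pos_of_neg hu hx0
      have hxb : b n < -x := by
        have h5 := neg_lt_neg hx'
        rwa [neg_neg] at h5
      have huxn : 0 < u n * (-x) := mul_pos hu (by linarith)
      have hcpos : 0 < w / (u n * (-x)) := div_pos hw huxn
      have hcb2 : w / (u n * (-x)) < b n :=
        lt_of_lt_of_le (div_lt_div_of_pos_left hw (mul_pos hu hb)
          ((mul_lt_mul_iff_right₀ hu).2 hxb)) hδn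
      have hcid : w / (u n * x) = -(w / (u n * (-x))) := by
        rw [mul_neg, div_neg, neg_neg]
      have hbc : -(b n) < w / (u n * x) := by
        rw [hcid]
        exact neg_lt_neg hcb2
      have hcneg : w / (u n * x) < 0 := by
        rw [hcid]
        linarith [hcpos]
      have hset : {y : ℝ | |y| ≤ b n ∧ w < u n * x * y} = Ico (-(b n)) (w / (u n * x)) := by
        ext y
        simp only [mem_setOf_eq, mem_Ico, abs_le]
        constructor
        · rintro ⟨⟨h1, h2⟩, h3⟩
          refine ⟨h1, ?_⟩
          rw [lt_div_iff_of_neg hux]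
          rw [mul_comm]
          exact h3
        · rintro ⟨h1, h2⟩
          have h3 : w < u n * x * y := by
            rw [lt_div_iff_of_neg hux] at h2
            rw [mul_comm] at h2
            exact h2
          have hyneg : y < 0 := lt_trans h2 hcneg
          exact ⟨⟨h1, by linarith⟩, h3⟩
      rw [hset]
      have hm : F (Iio (w / (u n * x)))
          = F (Iio (-(b n))) + F (Ico (-(b n)) (w / (u n * x))) := by
        rw [← measure_union ((Iio_disjoint_Ici le_rfl).mono_right Ico_subset_Ici_self)
          measurableSet_Ico, Iio_union_Ico_eq_Iio hbc.le]
      have hfin2 : F (Ico (-(b n)) (w / (u n * x))) ≠ ⊤ := by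
        refine ne_top_of_le_ne_top (hfinM (-(w / (u n * x))) (by linarith))
          (measure_mono ?_)
        intro y hy
        simpa [neg_neg] using hy.2
      rw [hm, ENNReal.toReal_add (hfinM (b n) hb) hfin2]
      ring
    set G : ℝ → ℝ := fun x => if 0 < x
        then (F (Ioi (w / (u n * x)))).toReal - (F (Ioi (b n))).toReal
        else (F (Iio (w / (u n * x)))).toReal - (F (Iio (-(b n)))).toReal with hGdef
    have hGun : MeasurableSet (Iio (-(b n)) ∪ Ioi (b n) : Set ℝ) :=
      measurableSet_Iio.union measurableSet_Ioi
    have hcongr1 : EqOn (fun x : ℝ => (F {y : ℝ | |y| ≤ b n ∧ w < u n * x * y}).toReal) G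
        (Iio (-(b n)) ∪ Ioi (b n)) := by
      intro x hx
      rcases hx with hx | hx
      · have hx0 : ¬ (0 < x) := by
          have : x < 0 := lt_trans hx (by linarith)
          linarith
        simp only [hGdef, if_neg hx0]
        exact negEq x hx
      · have hx0 : 0 < x := hb.trans hx
        simp only [hGdef, if_pos hx0]
        exact posEq x hx
    have hintpos : IntegrableOn G (Ioi (b n)) F := by
      have h1 : IntegrableOn (fun x : ℝ =>
          (F (Ioi (w / (u n * x)))).toReal - (F (Ioi (b n))).toReal) (Ioi (b n)) F := by
        haveI : IsFiniteMeasure (F.restrict (Ioi (b n))) :=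
          ⟨by rw [Measure.restrict_apply_univ]; exact lt_top_iff_ne_top.2 (hfinP _ hb)⟩
        exact (intOn F hp hw hlevy hsuppP hfinP hb hu).sub
          (integrable_const ((F (Ioi (b n))).toReal))
      refine h1.congr_fun (fun x hx => ?_) measurableSet_Ioi
      simp only [hGdef, if_pos (hb.trans hx)]
    have hν_int : IntegrableOn (fun x : ℝ =>
        (ν (Ioi (w / (u n * x)))).toReal - (ν (Ioi (b n))).toReal) (Ioi (b n)) ν := by
      haveI : IsFiniteMeasure (ν.restrict (Ioi (b n))) :=
        ⟨by rw [Measure.restrict_apply_univ]; exact lt_top_iff_ne_top.2 (hfinν _ hb)⟩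
      exact (intOn ν hp hw hlevyν hsuppν hfinν hb hu).sub
        (integrable_const ((ν (Ioi (b n))).toReal))
    have hcomp : ∀ x : ℝ, ((ν (Ioi (w / (u n * (-x))))).toReal - (ν (Ioi (b n))).toReal)
        = (F (Iio (w / (u n * x)))).toReal - (F (Iio (-(b n)))).toReal := by
      intro x
      rw [hνIoi, hνIoi, mul_neg, div_neg, neg_neg]
    have hintneg : IntegrableOn G (Iio (-(b n))) F := by
      have h3 := hν_int
      rw [IntegrableOn, hνdef, Measure.restrict_map hemb.measurable measurableSet_Ioi,
        hemb.integrable_map_iff, hpre] at h3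
      have h2 : IntegrableOn (fun x : ℝ =>
          (F (Iio (w / (u n * x)))).toReal - (F (Iio (-(b n)))).toReal) (Iio (-(b n))) F := by
        refine h3.congr (ae_of_all _ fun x => ?_)
        show ((Measure.map (fun x : ℝ => -x) F) (Ioi (w / (u n * (-x))))).toReal
            - ((Measure.map (fun x : ℝ => -x) F) (Ioi (b n))).toReal = _
        rw [← hνdef]
        exact hcomp x
      refine h2.congr_fun (fun x hx => ?_) measurableSet_Iio
      have hx0 : ¬ (0 < x) := by
        have : x < 0 := lt_trans hx (by linarith)
        linarith
      simp only [hGdef, if_neg hx0]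
    have hposint : ∫ x in Ioi (b n), G x ∂F = ∫ x in Ioi (b n),
        ((F (Ioi (w / (u n * x)))).toReal - (F (Ioi (b n))).toReal) ∂F := by
      refine setIntegral_congr_fun measurableSet_Ioi (fun x hx => ?_)
      simp only [hGdef, if_pos (hb.trans hx)]
    have hnegint : ∫ x in Ioi (b n),
        ((ν (Ioi (w / (u n * x)))).toReal - (ν (Ioi (b n))).toReal) ∂ν
          = ∫ x in Iio (-(b n)), G x ∂F := by
      rw [hνdef, hemb.setIntegral_map, hpre]
      refine setIntegral_congr_fun measurableSet_Iio (fun x hx => ?_)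
      have hx0 : ¬ (0 < x) := by
        have : x < 0 := lt_trans hx (by linarith)
        linarith
      simp only [hGdef, if_neg hx0]
      rw [← hνdef]
      exact hcomp x
    have hdisj : Disjoint (Iio (-(b n))) (Ioi (b n)) :=
      (Iio_disjoint_Ici (by linarith)).mono_right Ioi_subset_Ici_self
    rw [hS, setIntegral_congr_fun hGun hcongr1,
      setIntegral_union hdisj measurableSet_Ioi hintneg hintpos, hposint, hnegint]
    ring
  have hfinal := coreF.add coreν
  rw [show θp^2/(2*w^α) + θm^2/(2*w^α) = (θp^2+θm^2)/(2*w^α) from (add_div _ _ _).symm]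
    at hfinal
  exact hfinal.congr' (hkey.mono fun n h => h.symm)
end
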